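/- arXiv:2002.00804 — 7 statements merged into one kernel-verified Lean document; each statement's English description precedes it below -/
import Mathlib

section
/- Let V be a topological vector space, F : V → [0,∞] continuous and convex, (x_i)_{i=1}^N elements of V, (ε_i) i.i.d. real symmetric random variables, and (α_i) real numbers in [-1,1]. Then E[F(∑_i α_i ε_i x_i)] ≤ E[F(∑_i ε_i x_i)]. -/
open MeasureTheory ProbabilityTheory

lemma jensen_aux {V : Type*} [AddCommGroup V] [Module ℝ V] (F : V → ENNReal)
    (hFconv : ∀ x y : V, ∀ a b : ℝ, 0 ≤ a → 0 ≤ b → a + b = 1 →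
      F (a • x + b • y) ≤ ENNReal.ofReal a * F x + ENNReal.ofReal b * F y)
    {ι : Type*} (s : Finset ι) (w : ι → ℝ) (v : ι → V)
    (hw : ∀ i ∈ s, 0 ≤ w i) (hw1 : ∑ i ∈ s, w i = 1) :
    F (∑ i ∈ s, w i • v i) ≤ ∑ i ∈ s, ENNReal.ofReal (w i) * F (v i) := by
  classical
  induction s using Finset.induction generalizing w with
  | empty => simp at hw1
  | insert a s ha ih =>
    rw [Finset.sum_insert ha] at hw1 ⊢
    rw [Finset.sum_insert ha]
    have hwa : 0 ≤ w a := hw a (Finset.mem_insert_self a s)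
    have hws : ∀ i ∈ s, 0 ≤ w i := fun i hi => hw i (Finset.mem_insert_of_mem hi)
    set c : ℝ := ∑ i ∈ s, w i with hc
    have hc0 : 0 ≤ c := Finset.sum_nonneg hws
    rcases eq_or_lt_of_le hc0 with hceq | hcpos
    · -- c = 0, so all weights in s are zero and w a = 1
      have hz : ∀ i ∈ s, w i = 0 := (Finset.sum_eq_zero_iff_of_nonneg hws).mp hceq.symm
      have hwa1 : w a = 1 := by rw [← hceq] at hw1; linarith
      have hsum0 : ∑ i ∈ s, w i • v i = 0 :=
        Finset.sum_eq_zero fun i hi => by rw [hz i hi, zero_smul]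
      rw [hsum0, hwa1, add_zero, one_smul]
      calc F (v a) = ENNReal.ofReal (w a) * F (v a) := by rw [hwa1]; simp
        _ ≤ ENNReal.ofReal (w a) * F (v a) + ∑ i ∈ s, ENNReal.ofReal (w i) * F (v i) :=
          le_self_add
        _ ≤ _ := by rw [hwa1]
    · -- c > 0
      have key : ∑ i ∈ s, w i • v i = c • ∑ i ∈ s, (w i / c) • v i := by
        rw [Finset.smul_sum]
        refine Finset.sum_congr rfl fun i hi => ?_
        rw [smul_smul, mul_div_cancel₀ _ (ne_of_gt hcpos)]
      rw [key]
      have h1 : w a + c = 1 := hw1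
      calc F (w a • v a + c • ∑ i ∈ s, (w i / c) • v i)
          ≤ ENNReal.ofReal (w a) * F (v a)
            + ENNReal.ofReal c * F (∑ i ∈ s, (w i / c) • v i) :=
            hFconv _ _ _ _ hwa hc0 h1
        _ ≤ ENNReal.ofReal (w a) * F (v a)
            + ENNReal.ofReal c * ∑ i ∈ s, ENNReal.ofReal (w i / c) * F (v i) := by
            gcongr
            exact ih _ (fun i hi => div_nonneg (hws i hi) hc0)
              (by rw [← Finset.sum_div, ← hc, div_self (ne_of_gt hcpos)])
        _ = ENNReal.ofReal (w a) * F (v a) + ∑ i ∈ s, ENNReal.ofReal (w i) * F (v i) := by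
            congr 1
            rw [Finset.mul_sum]
            refine Finset.sum_congr rfl fun i hi => ?_
            rw [← mul_assoc, ← ENNReal.ofReal_mul hc0, mul_div_cancel₀ _ (ne_of_gt hcpos)]

lemma joint_law_eq {Ω : Type*} [MeasurableSpace Ω] (μ : Measure Ω) [IsProbabilityMeasure μ]
    {N : ℕ} (ε η : Fin N → Ω → ℝ)
    (hε : ∀ i, Measurable (ε i)) (hη : ∀ i, Measurable (η i))
    (hεi : iIndepFun ε μ)
    (hηi : iIndepFun η μ)
    (hmarg : ∀ i, μ.map (ε i) = μ.map (η i)) :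
    μ.map (fun ω => fun i => ε i ω) = μ.map (fun ω => fun i => η i ω) := by
  have hmε : Measurable (fun ω => fun i => ε i ω) := measurable_pi_lambda _ hε
  have hmη : Measurable (fun ω => fun i => η i ω) := measurable_pi_lambda _ hη
  refine ext_of_generate_finite _ generateFrom_pi.symm isPiSystem_pi ?_ ?_
  · rintro _ ⟨B, hB, rfl⟩
    simp only [Set.mem_pi, Set.mem_univ, forall_true_left] at hB
    have hBm : ∀ i, MeasurableSet (B i) := fun i => hB i
    have hbox : MeasurableSet (Set.pi Set.univ B) := MeasurableSet.univ_pi hBm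
    rw [Measure.map_apply hmε hbox, Measure.map_apply hmη hbox]
    have hpre : ∀ f : Fin N → Ω → ℝ,
        (fun ω => fun i => f i ω) ⁻¹' Set.pi Set.univ B = ⋂ i ∈ Finset.univ, f i ⁻¹' B i := by
      intro f; ext ω
      simp [Set.mem_pi]
    rw [hpre ε, hpre η,
      hεi.measure_inter_preimage_eq_mul Finset.univ (fun i _ => hBm i),
      hηi.measure_inter_preimage_eq_mul Finset.univ (fun i _ => hBm i)]
    refine Finset.prod_congr rfl fun i _ => ?_
    rw [← Measure.map_apply (hε i) (hBm i), ← Measure.map_apply (hη i) (hBm i), hmarg i]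
  · rw [Measure.map_apply hmε MeasurableSet.univ, Measure.map_apply hmη MeasurableSet.univ]
    simp

theorem stmt2 {V : Type*} [AddCommGroup V] [Module ℝ V] [TopologicalSpace V]
    [IsTopologicalAddGroup V] [ContinuousSMul ℝ V]
    {Ω : Type*} [MeasurableSpace Ω] (μ : Measure Ω) [IsProbabilityMeasure μ]
    (F : V → ENNReal) (hFcont : Continuous F)
    (hFconv : ∀ x y : V, ∀ a b : ℝ, 0 ≤ a → 0 ≤ b → a + b = 1 →
      F (a • x + b • y) ≤ ENNReal.ofReal a * F x + ENNReal.ofReal b * F y)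
    (N : ℕ) (x : Fin N → V) (ε : Fin N → Ω → ℝ)
    (hmeas : ∀ i, Measurable (ε i))
    (hindep : iIndepFun ε μ)
    (hident : ∀ i j, μ.map (ε i) = μ.map (ε j))
    (hsymm : ∀ i, μ.map (ε i) = μ.map (fun ω => -(ε i ω)))
    (α : Fin N → ℝ) (hα : ∀ i, |α i| ≤ 1) :
    ∫⁻ ω, F (∑ i, (α i * ε i ω) • x i) ∂μ ≤ ∫⁻ ω, F (∑ i, ε i ω • x i) ∂μ := by
  classical
  set sg : Bool → ℝ := fun b => if b then 1 else -1 with hsg_def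
  set f : Fin N → Bool → ℝ := fun i b => (1 + sg b * α i) / 2 with hf_def
  set w : (Fin N → Bool) → ℝ := fun s => ∏ i, f i (s i) with hw_def
  have hα' : ∀ i, -1 ≤ α i ∧ α i ≤ 1 := fun i => abs_le.mp (hα i)
  have hf0 : ∀ i b, 0 ≤ f i b := by
    intro i b
    obtain ⟨h1, h2⟩ := hα' i
    cases b <;> simp [hf_def, hsg_def] <;> linarith
  have hw0 : ∀ s, 0 ≤ w s := fun s => Finset.prod_nonneg fun i _ => hf0 i (s i)
  have hfsum : ∀ i, ∑ b : Bool, f i b = 1 := by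
    intro i
    rw [Fintype.sum_bool]
    simp [hf_def, hsg_def]
    ring
  have hwsum : ∑ s : Fin N → Bool, w s = 1 := by
    calc ∑ s : Fin N → Bool, w s
        = ∑ s ∈ Fintype.piFinset (fun _ : Fin N => (Finset.univ : Finset Bool)),
            ∏ i, f i (s i) := by rw [Fintype.piFinset_univ]
      _ = ∏ i, ∑ b : Bool, f i b := (Finset.prod_univ_sum _ _).symm
      _ = 1 := Finset.prod_eq_one fun i _ => hfsum i
  have hsgsum : ∀ i, ∑ s : Fin N → Bool, w s * sg (s i) = α i := by
    intro i
    set g : Fin N → Bool → ℝ := fun j b => if j = i then f j b * sg b else f j b with hg_def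
    have step1 : ∀ s : Fin N → Bool, w s * sg (s i) = ∏ j, g j (s j) := by
      intro s
      have : ∀ j, g j (s j) = f j (s j) * (if j = i then sg (s j) else 1) := by
        intro j; simp only [hg_def]; split_ifs <;> ring
      calc w s * sg (s i) = (∏ j, f j (s j)) * ∏ j, (if j = i then sg (s j) else 1) := by
            rw [Finset.prod_ite_eq' Finset.univ i (fun j => sg (s j)),
              if_pos (Finset.mem_univ i)]
        _ = ∏ j, f j (s j) * (if j = i then sg (s j) else 1) := by
            rw [Finset.prod_mul_distrib]
        _ = ∏ j, g j (s j) := by exact Finset.prod_congr rfl fun j _ => (this j).symm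
    have hgsum : ∀ j, ∑ b : Bool, g j b = if j = i then α i else 1 := by
      intro j
      simp only [hg_def]
      split_ifs with h
      · subst h
        rw [Fintype.sum_bool]
        simp [hf_def, hsg_def]
        ring
      · exact hfsum j
    calc ∑ s : Fin N → Bool, w s * sg (s i) = ∑ s : Fin N → Bool, ∏ j, g j (s j) :=
          Finset.sum_congr rfl fun s _ => step1 s
      _ = ∑ s ∈ Fintype.piFinset (fun _ : Fin N => (Finset.univ : Finset Bool)),
            ∏ j, g j (s j) := by rw [Fintype.piFinset_univ]
      _ = ∏ j, ∑ b : Bool, g j b := (Finset.prod_univ_sum _ _).symm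
      _ = α i := by
          rw [Finset.prod_eq_single i (fun j _ hj => by rw [hgsum j, if_neg hj])
            (fun h => absurd (Finset.mem_univ i) h)]
          rw [hgsum i, if_pos rfl]
  -- pointwise reconstruction
  have recon : ∀ ω, ∑ i, (α i * ε i ω) • x i
      = ∑ s : Fin N → Bool, w s • ∑ i, (sg (s i) * ε i ω) • x i := by
    intro ω
    calc ∑ i, (α i * ε i ω) • x i
        = ∑ i, ∑ s : Fin N → Bool, ((w s * sg (s i)) * ε i ω) • x i := by
          refine Finset.sum_congr rfl fun i _ => ?_
          rw [← Finset.sum_smul, ← Finset.sum_mul, hsgsum i]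
      _ = ∑ s : Fin N → Bool, ∑ i, ((w s * sg (s i)) * ε i ω) • x i := Finset.sum_comm
      _ = ∑ s : Fin N → Bool, w s • ∑ i, (sg (s i) * ε i ω) • x i := by
          refine Finset.sum_congr rfl fun s _ => ?_
          rw [Finset.smul_sum]
          refine Finset.sum_congr rfl fun i _ => ?_
          rw [smul_smul, mul_assoc]
  -- measurable "profile" function
  set G : (Fin N → ℝ) → ENNReal := fun y => F (∑ i, y i • x i) with hG_def
  have hG : Measurable G := by
    have : Continuous G := by
      apply hFcont.comp
      exact continuous_finset_sum _ fun i _ => (continuous_apply i).smul continuous_const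
    exact this.measurable
  have hterm_meas : ∀ s : Fin N → Bool,
      Measurable (fun ω => F (∑ i, (sg (s i) * ε i ω) • x i)) := by
    intro s
    exact hG.comp (measurable_pi_lambda _ fun i => (hmeas i).const_mul _)
  -- equality of sign-flipped integral with original
  have hflip : ∀ s : Fin N → Bool,
      ∫⁻ ω, F (∑ i, (sg (s i) * ε i ω) • x i) ∂μ = ∫⁻ ω, F (∑ i, ε i ω • x i) ∂μ := by
    intro s
    set η : Fin N → Ω → ℝ := fun i ω => sg (s i) * ε i ω with hη_def
    have hηm : ∀ i, Measurable (η i) := fun i => (hmeas i).const_mul _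
    have hηi : iIndepFun η μ :=
      hindep.comp (fun i r => sg (s i) * r) fun i => measurable_const_mul _
    have hmarg : ∀ i, μ.map (ε i) = μ.map (η i) := by
      intro i
      cases hb : s i with
      | true => simp [hη_def, hsg_def, hb]
      | false =>
        have : η i = fun ω => -(ε i ω) := by
          funext ω; simp [hη_def, hsg_def, hb]
        rw [this]; exact hsymm i
    have h1 : ∫⁻ ω, F (∑ i, (sg (s i) * ε i ω) • x i) ∂μ
        = ∫⁻ ω, G (fun i => η i ω) ∂μ := rfl
    have h2 : ∫⁻ ω, F (∑ i, ε i ω • x i) ∂μ = ∫⁻ ω, G (fun i => ε i ω) ∂μ := rfl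
    rw [h1, h2, ← lintegral_map hG (measurable_pi_lambda _ hηm),
      ← lintegral_map hG (measurable_pi_lambda _ hmeas),
      joint_law_eq μ ε η hmeas hηm hindep hηi hmarg]
  -- put it together
  calc ∫⁻ ω, F (∑ i, (α i * ε i ω) • x i) ∂μ
      ≤ ∫⁻ ω, ∑ s : Fin N → Bool,
          ENNReal.ofReal (w s) * F (∑ i, (sg (s i) * ε i ω) • x i) ∂μ := by
        apply lintegral_mono
        intro ω
        dsimp only
        rw [recon ω]
        exact jensen_aux F hFconv Finset.univ w _ (fun s _ => hw0 s) hwsum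
    _ = ∑ s : Fin N → Bool,
          ∫⁻ ω, ENNReal.ofReal (w s) * F (∑ i, (sg (s i) * ε i ω) • x i) ∂μ :=
        lintegral_finset_sum _ fun s _ => (hterm_meas s).const_mul _
    _ = ∑ s : Fin N → Bool,
          ENNReal.ofReal (w s) * ∫⁻ ω, F (∑ i, (sg (s i) * ε i ω) • x i) ∂μ := by
        refine Finset.sum_congr rfl fun s _ => ?_
        exact lintegral_const_mul _ (hterm_meas s)
    _ = ∑ s : Fin N → Bool,
          ENNReal.ofReal (w s) * ∫⁻ ω, F (∑ i, ε i ω • x i) ∂μ := by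
        refine Finset.sum_congr rfl fun s _ => ?_
        rw [hflip s]
    _ = ∫⁻ ω, F (∑ i, ε i ω • x i) ∂μ := by
        rw [← Finset.sum_mul, ← ENNReal.ofReal_sum_of_nonneg (fun s _ => hw0 s), hwsum]
        simp
end

section
/- Let V be a topological vector space, F : V → [0,∞] a continuous seminorm, (x_i)_{i=1}^N elements of V, (ε_i) i.i.d. real symmetric random variables, and (α_i) real numbers in [-1,1]. Then for all t > 0, P[F(∑_i α_i ε_i x_i) ≥ t] ≤ 2 P[F(∑_i ε_i x_i) ≥ t]. -/
open MeasureTheory ProbabilityTheory Finset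

section aux
variable {Ω : Type*} [MeasurableSpace Ω]

lemma joint_eq (μ : Measure Ω) [IsProbabilityMeasure μ] (N : ℕ) (ε : Fin N → Ω → ℝ)
    (hmeas : ∀ i, Measurable (ε i))
    (hindep : iIndepFun ε μ) :
    μ.map (fun ω i => ε i ω) = Measure.pi (fun i => μ.map (ε i)) := by
  haveI : ∀ i, IsProbabilityMeasure (μ.map (ε i)) :=
    fun i => Measure.isProbabilityMeasure_map (hmeas i).aemeasurable
  refine (Measure.pi_eq fun s hs => ?_).symm
  rw [Measure.map_apply (measurable_pi_lambda _ fun i => hmeas i)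
    (MeasurableSet.univ_pi fun i => hs i)]
  have hpre : (fun ω i => ε i ω) ⁻¹' Set.pi Set.univ s
      = ⋂ i ∈ (Finset.univ : Finset (Fin N)), ε i ⁻¹' s i := by
    ext ω; simp [Set.mem_pi]
  rw [hpre, hindep.measure_inter_preimage_eq_mul Finset.univ (fun i _ => hs i)]
  exact Finset.prod_congr rfl fun i _ =>
    (Measure.map_apply (hmeas i) (hs i)).symm

lemma flip_eq (μ : Measure Ω) [IsProbabilityMeasure μ] (N : ℕ) (ε : Fin N → Ω → ℝ)
    (hmeas : ∀ i, Measurable (ε i))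
    (hindep : iIndepFun ε μ)
    (hsymm : ∀ i, μ.map (ε i) = μ.map (fun ω => -(ε i ω)))
    (e : Fin N → ℝ) (he : ∀ i, e i = 1 ∨ e i = -1) :
    μ.map (fun ω i => e i * ε i ω) = μ.map (fun ω i => ε i ω) := by
  have hmeas' : ∀ i, Measurable (fun ω => e i * ε i ω) :=
    fun i => (hmeas i).const_mul _
  have hindep' : iIndepFun (fun i ω => e i * ε i ω) μ :=
    hindep.comp (fun i r => e i * r) (fun i => measurable_const_mul _)
  rw [joint_eq μ N _ hmeas' hindep', joint_eq μ N ε hmeas hindep]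
  congr 1
  funext i
  rcases he i with h | h
  · simp [h]
  · have : (fun ω => e i * ε i ω) = fun ω => -(ε i ω) := by
      funext ω; rw [h]; ring
    rw [this, ← hsymm i]

lemma abel_id {V : Type*} [AddCommGroup V] [Module ℝ V] (f : ℕ → ℝ) (g : ℕ → V) (n : ℕ) :
    ∑ k ∈ Finset.range n, (f k - f (k+1)) • (∑ j ∈ Finset.range (k+1), g j)
      = (∑ k ∈ Finset.range n, f k • g k) - f n • ∑ j ∈ Finset.range n, g j := by
  induction n with
  | zero => simp
  | succ n ih =>
      rw [Finset.sum_range_succ, ih, Finset.sum_range_succ (fun k => f k • g k),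
        Finset.sum_range_succ g, sub_smul, smul_add]
      abel

end aux

theorem stmt3 {V : Type*} [AddCommGroup V] [Module ℝ V] [TopologicalSpace V]
    [IsTopologicalAddGroup V] [ContinuousSMul ℝ V]
    {Ω : Type*} [MeasurableSpace Ω] (μ : Measure Ω) [IsProbabilityMeasure μ]
    (F : V → ENNReal) (hFcont : Continuous F)
    -- F is a (possibly infinite-valued) seminorm
    (hFadd : ∀ x y : V, F (x + y) ≤ F x + F y)
    (hFsmul : ∀ (a : ℝ) (x : V), F (a • x) = ENNReal.ofReal |a| * F x)
    (N : ℕ) (x : Fin N → V) (ε : Fin N → Ω → ℝ)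
    (hmeas : ∀ i, Measurable (ε i))
    (hindep : iIndepFun ε μ)
    (hident : ∀ i j, μ.map (ε i) = μ.map (ε j))
    (hsymm : ∀ i, μ.map (ε i) = μ.map (fun ω => -(ε i ω)))
    (α : Fin N → ℝ) (hα : ∀ i, |α i| ≤ 1) :
    ∀ t : ENNReal, 0 < t →
      μ {ω | t ≤ F (∑ i, (α i * ε i ω) • x i)} ≤
        2 * μ {ω | t ≤ F (∑ i, ε i ω • x i)} := by
  intro t ht
  classical
  letI : MeasurableSpace V := borel V
  haveI : BorelSpace V := ⟨rfl⟩
  have hF0 : F 0 = 0 := by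
    have h := hFsmul 0 0
    simpa using h
  -- trivial case N = 0
  rcases Nat.eq_zero_or_pos N with hN0 | hN
  · subst hN0
    have h1 : {ω : Ω | t ≤ F (∑ i : Fin 0, (α i * ε i ω) • x i)} = ∅ := by
      ext ω
      simp [hF0, ht.ne', le_zero_iff]
    rw [h1]
    simp
  -- setup
  set β : Fin N → ℝ := fun i => |α i| with hβ
  have hβ0 : ∀ i, 0 ≤ β i := fun i => abs_nonneg _
  have hβ1 : ∀ i, β i ≤ 1 := fun i => hα i
  set σ : Equiv.Perm (Fin N) := Tuple.sort (fun i => -β i) with hσ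
  have hanti : ∀ {i j : Fin N}, i ≤ j → β (σ j) ≤ β (σ i) := by
    intro i j hij
    have := Tuple.monotone_sort (fun i => -β i) hij
    simpa using this
  set a : ℕ → ℝ := fun k => if h : k < N then β (σ ⟨k, h⟩) else 0 with ha
  set w : ℕ → (Fin N → ℝ) → V :=
    fun k c => if h : k < N then c (σ ⟨k, h⟩) • x (σ ⟨k, h⟩) else 0 with hw
  set S : ℕ → (Fin N → ℝ) → V := fun k c => ∑ j ∈ Finset.range k, w j c with hS
  have ha_nonneg : ∀ k, 0 ≤ a k := by
    intro k; rw [ha]; dsimp only; split <;> [exact hβ0 _; exact le_rfl]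
  have ha_anti : ∀ {k l : ℕ}, k ≤ l → a l ≤ a k := by
    intro k l hkl
    rw [ha]; dsimp only
    split
    · rename_i hl
      have hk : k < N := lt_of_le_of_lt hkl hl
      rw [dif_pos hk]
      exact hanti (by exact_mod_cast hkl)
    · split
      · exact hβ0 _
      · exact le_rfl
  have haN : a N = 0 := by rw [ha]; simp
  have ha0 : a 0 ≤ 1 := by
    rw [ha]; dsimp only; rw [dif_pos hN]; exact hβ1 _
  have hwcont : ∀ k, Continuous (w k) := by
    intro k
    rw [hw]; dsimp only
    by_cases h : k < N
    · simp only [dif_pos h]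
      exact (continuous_apply _).smul continuous_const
    · simp only [dif_neg h]; exact continuous_const
  have hScont : ∀ k, Continuous (S k) := by
    intro k
    rw [hS]; dsimp only
    exact continuous_finset_sum _ fun j _ => hwcont j
  have hSN : ∀ c : Fin N → ℝ, S N c = ∑ i, c i • x i := by
    intro c
    rw [hS]; dsimp only
    rw [← Fin.sum_univ_eq_sum_range (fun j => w j c) N]
    rw [← Equiv.sum_comp σ (fun i => c i • x i)]
    refine Finset.sum_congr rfl fun i _ => ?_
    rw [hw]; dsimp only
    rw [dif_pos i.isLt]
  have hSdef : ∀ k c, S k c = ∑ j ∈ Finset.range k, w j c := fun k c => by rw [hS]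
  -- measurability of events
  have hmeasSet : ∀ (g : (Fin N → ℝ) → V), Continuous g →
      MeasurableSet {c : Fin N → ℝ | t ≤ F (g c)} := by
    intro g hg
    exact (isClosed_le continuous_const (hFcont.comp hg)).measurableSet
  have hmapmeas : Measurable (fun ω (i : Fin N) => ε i ω) :=
    measurable_pi_lambda _ fun i => hmeas i
  set π : Measure (Fin N → ℝ) := μ.map (fun ω i => ε i ω) with hπ
  have hπflip : ∀ e : Fin N → ℝ, (∀ i, e i = 1 ∨ e i = -1) →
      π.map (fun c i => e i * c i) = π := by
    intro e he
    have hT : Measurable (fun (c : Fin N → ℝ) i => e i * c i) :=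
      measurable_pi_lambda _ fun i => (measurable_pi_apply i).const_mul _
    rw [hπ, Measure.map_map hT hmapmeas]
    exact flip_eq μ N ε hmeas hindep hsymm e he
  set A : Set (Fin N → ℝ) := {c | t ≤ F (∑ i, (α i * c i) • x i)} with hA
  set Aβ : Set (Fin N → ℝ) := {c | t ≤ F (∑ i, (β i * c i) • x i)} with hAβ
  set E : Set (Fin N → ℝ) := {c | t ≤ F (S N c)} with hE
  have hAmeas : MeasurableSet A :=
    hmeasSet _ (continuous_finset_sum _ fun i _ =>
      (continuous_const.mul (continuous_apply i)).smul continuous_const)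
  have hAβmeas : MeasurableSet Aβ :=
    hmeasSet _ (continuous_finset_sum _ fun i _ =>
      (continuous_const.mul (continuous_apply i)).smul continuous_const)
  have hEmeas : MeasurableSet E := hmeasSet _ (hScont N)
  have hLHS : μ {ω | t ≤ F (∑ i, (α i * ε i ω) • x i)} = π A := by
    rw [hπ, Measure.map_apply hmapmeas hAmeas]
    rfl
  have hRHS : μ {ω | t ≤ F (∑ i, ε i ω • x i)} = π E := by
    rw [hπ, Measure.map_apply hmapmeas hEmeas]
    congr 1
    ext ω
    simp only [Set.mem_preimage, hE, Set.mem_setOf_eq, hSN]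
  have hsign : π A = π Aβ := by
    set e : Fin N → ℝ := fun i => if 0 ≤ α i then 1 else -1 with he
    have he1 : ∀ i, e i = 1 ∨ e i = -1 := by
      intro i; rw [he]; dsimp only; split
      · exact Or.inl rfl
      · exact Or.inr rfl
    have hkey : ∀ i (r : ℝ), β i * (e i * r) = α i * r := by
      intro i r
      rw [he, hβ]; dsimp only
      split
      · rename_i h; rw [abs_of_nonneg h]; ring
      · rename_i h; rw [abs_of_neg (lt_of_not_ge h)]; ring
    have hT : Measurable (fun (c : Fin N → ℝ) i => e i * c i) :=
      measurable_pi_lambda _ fun i => (measurable_pi_apply i).const_mul _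
    have hpre : (fun (c : Fin N → ℝ) i => e i * c i) ⁻¹' Aβ = A := by
      ext c
      simp only [Set.mem_preimage, hAβ, hA, Set.mem_setOf_eq]
      rw [Finset.sum_congr rfl fun i _ => by rw [hkey i (c i)]]
    rw [← hpre, ← Measure.map_apply hT hAβmeas, hπflip e he1]
  have hsub : Aβ ⊆ ⋃ k ∈ Finset.range N, {c | t ≤ F (S (k+1) c)} := by
    intro c hc
    have hrw : ∑ i, (β i * c i) • x i = ∑ k ∈ Finset.range N, a k • w k c := by
      rw [← Fin.sum_univ_eq_sum_range (fun k => a k • w k c) N]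
      rw [← Equiv.sum_comp σ (fun i => (β i * c i) • x i)]
      refine Finset.sum_congr rfl fun i _ => ?_
      rw [ha, hw]; dsimp only
      rw [dif_pos i.isLt, dif_pos i.isLt, smul_smul]
    have heq : ∑ k ∈ Finset.range N, (a k - a (k+1)) • S (k+1) c
        = ∑ i, (β i * c i) • x i := by
      rw [Finset.sum_congr rfl fun k _ => by rw [hSdef (k+1) c],
        abel_id a (fun k => w k c) N, haN, zero_smul, sub_zero, hrw]
    have hc' : t ≤ F (∑ k ∈ Finset.range N, (a k - a (k+1)) • S (k+1) c) := by
      rw [heq]; exact hc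
    set M := (Finset.range N).sup (fun k => F (S (k+1) c)) with hM
    have hbound : F (∑ k ∈ Finset.range N, (a k - a (k+1)) • S (k+1) c) ≤ M := by
      calc F (∑ k ∈ Finset.range N, (a k - a (k+1)) • S (k+1) c)
          ≤ ∑ k ∈ Finset.range N, F ((a k - a (k+1)) • S (k+1) c) :=
            Finset.le_sum_of_subadditive F hF0.le hFadd _ _
        _ = ∑ k ∈ Finset.range N, ENNReal.ofReal (a k - a (k+1)) * F (S (k+1) c) := by
            refine Finset.sum_congr rfl fun k _ => ?_
            rw [hFsmul, abs_of_nonneg (sub_nonneg.2 (ha_anti (Nat.le_succ k)))]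
        _ ≤ ∑ k ∈ Finset.range N, ENNReal.ofReal (a k - a (k+1)) * M := by
            refine Finset.sum_le_sum fun k hk => ?_
            exact mul_le_mul_right (hM ▸ Finset.le_sup (f := fun k => F (S (k+1) c)) hk) _
        _ = ENNReal.ofReal (∑ k ∈ Finset.range N, (a k - a (k+1))) * M := by
            rw [← Finset.sum_mul, ENNReal.ofReal_sum_of_nonneg]
            intro k _; exact sub_nonneg.2 (ha_anti (Nat.le_succ k))
        _ ≤ 1 * M := by
            refine mul_le_mul_left ?_ M
            rw [Finset.sum_range_sub' a N, haN, sub_zero]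
            exact ENNReal.ofReal_le_one.2 ha0
        _ = M := one_mul M
    have hsup := le_trans hc' hbound
    rw [hM, Finset.le_sup_iff (by simpa using ht : (⊥ : ENNReal) < t)] at hsup
    obtain ⟨k, hk, hkt⟩ := hsup
    exact Set.mem_biUnion hk hkt
  -- Lévy reflection part
  set A' : ℕ → Set (Fin N → ℝ) := fun k => {c | t ≤ F (S (k+1) c)} with hA'
  have hA'meas : ∀ k, MeasurableSet (A' k) := fun k => hmeasSet _ (hScont (k+1))
  set B : ℕ → Set (Fin N → ℝ) := fun k => A' k \ ⋃ j ∈ Finset.range k, A' j with hB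
  have hBmeas : ∀ k, MeasurableSet (B k) := fun k =>
    (hA'meas k).diff (MeasurableSet.biUnion (Finset.range k).countable_toSet
      fun j _ => hA'meas j)
  have hUsub : (⋃ k ∈ Finset.range N, A' k) ⊆ ⋃ k ∈ Finset.range N, B k := by
    intro c hc
    obtain ⟨k, hkN, hck⟩ := Set.mem_iUnion₂.1 hc
    have hex : ∃ m, c ∈ A' m := ⟨k, hck⟩
    have hm : c ∈ A' (Nat.find hex) := Nat.find_spec hex
    have hmN : Nat.find hex < N :=
      lt_of_le_of_lt (Nat.find_min' hex hck) (Finset.mem_range.1 hkN)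
    refine Set.mem_iUnion₂.2 ⟨Nat.find hex, Finset.mem_range.2 hmN, hm, fun hmem => ?_⟩
    obtain ⟨j, hj, hcj⟩ := Set.mem_iUnion₂.1 hmem
    exact Nat.find_min hex (Finset.mem_range.1 hj) hcj
  have hdisj : (↑(Finset.range N) : Set ℕ).PairwiseDisjoint B := by
    have key : ∀ j k : ℕ, j < k → Disjoint (B j) (B k) := by
      intro j k h
      refine Set.disjoint_left.2 fun c hcj hck => ?_
      exact hck.2 (Set.mem_iUnion₂.2 ⟨j, Finset.mem_range.2 h, hcj.1⟩)
    intro j _ k _ hjk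
    rcases hjk.lt_or_gt with h | h
    · exact key j k h
    · exact (key k j h).symm
  have hrefl : ∀ k ∈ Finset.range N, π (B k) ≤ 2 * π (B k ∩ E) := by
    intro k hkr
    have hkN : k < N := Finset.mem_range.1 hkr
    set e : Fin N → ℝ := fun i => if (σ.symm i : ℕ) < k + 1 then 1 else -1 with he
    have he1 : ∀ i, e i = 1 ∨ e i = -1 := by
      intro i; rw [he]; dsimp only; split
      · exact Or.inl rfl
      · exact Or.inr rfl
    set T : (Fin N → ℝ) → (Fin N → ℝ) := fun c i => e i * c i with hT
    have hTmeas : Measurable T :=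
      measurable_pi_lambda _ fun i => (measurable_pi_apply i).const_mul _
    have hwT : ∀ (m : ℕ) (c : Fin N → ℝ), m < k + 1 → w m (T c) = w m c := by
      intro m c hm
      rw [hw]; dsimp only
      by_cases hmN : m < N
      · rw [dif_pos hmN, dif_pos hmN]
        have he2 : e (σ ⟨m, hmN⟩) = 1 := by
          rw [he]; dsimp only
          rw [Equiv.symm_apply_apply]
          exact if_pos hm
        rw [hT]; dsimp only
        rw [he2, one_mul]
      · rw [dif_neg hmN, dif_neg hmN]
    have hwT' : ∀ (m : ℕ) (c : Fin N → ℝ), k + 1 ≤ m → m < N → w m (T c) = - w m c := by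
      intro m c hm hmN
      rw [hw]; dsimp only
      rw [dif_pos hmN, dif_pos hmN]
      have he2 : e (σ ⟨m, hmN⟩) = -1 := by
        rw [he]; dsimp only
        rw [Equiv.symm_apply_apply]
        exact if_neg (by simp only [Fin.val_mk]; omega)
      rw [hT]; dsimp only
      rw [he2, neg_one_mul, neg_smul]
    have hST : ∀ (j : ℕ), j ≤ k + 1 → ∀ c, S j (T c) = S j c := by
      intro j hj c
      rw [hSdef, hSdef]
      exact Finset.sum_congr rfl fun m hm =>
        hwT m c (lt_of_lt_of_le (Finset.mem_range.1 hm) hj)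
    have hSsum : ∀ c, S N (T c) + S N c = S (k+1) c + S (k+1) c := by
      intro c
      rw [hSdef, hSdef, hSdef, ← Finset.sum_add_distrib, ← Finset.sum_add_distrib]
      have h1 : ∀ m ∈ Finset.range N, w m (T c) + w m c
          = if m < k + 1 then w m c + w m c else 0 := by
        intro m hm
        by_cases hmk : m < k + 1
        · rw [if_pos hmk, hwT m c hmk]
        · rw [if_neg hmk, hwT' m c (le_of_not_gt hmk) (Finset.mem_range.1 hm),
            neg_add_cancel]
      rw [Finset.sum_congr rfl h1,
        ← Finset.sum_subset (Finset.range_subset_range.2 hkN)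
          (fun m _ hm => if_neg (fun h => hm (Finset.mem_range.2 h))),
        Finset.sum_congr rfl (fun m hm => if_pos (Finset.mem_range.1 hm))]
    have hTmemA' : ∀ (j : ℕ), j ≤ k → ∀ c : Fin N → ℝ, (T c ∈ A' j ↔ c ∈ A' j) := by
      intro j hj c
      rw [hA']; dsimp only
      rw [Set.mem_setOf_eq, Set.mem_setOf_eq, hST (j+1) (by omega) c]
    have hTB : T ⁻¹' B k = B k := by
      ext c
      rw [Set.mem_preimage, hB]; dsimp only
      rw [Set.mem_diff, Set.mem_diff]
      constructor
      · rintro ⟨h1, h2⟩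
        refine ⟨(hTmemA' k le_rfl c).1 h1, fun hc => h2 ?_⟩
        obtain ⟨j, hj, hcj⟩ := Set.mem_iUnion₂.1 hc
        exact Set.mem_iUnion₂.2
          ⟨j, hj, (hTmemA' j (le_of_lt (Finset.mem_range.1 hj)) c).2 hcj⟩
      · rintro ⟨h1, h2⟩
        refine ⟨(hTmemA' k le_rfl c).2 h1, fun hc => h2 ?_⟩
        obtain ⟨j, hj, hcj⟩ := Set.mem_iUnion₂.1 hc
        exact Set.mem_iUnion₂.2
          ⟨j, hj, (hTmemA' j (le_of_lt (Finset.mem_range.1 hj)) c).1 hcj⟩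
    have hmain : B k ⊆ (B k ∩ E) ∪ (B k ∩ T ⁻¹' E) := by
      intro c hc
      have hct : t ≤ F (S (k+1) c) := hc.1
      have hkey : 2 * F (S (k+1) c) ≤ 2 * (F (S N c) ⊔ F (S N (T c))) := by
        have e1 : (2 : ENNReal) * F (S (k+1) c) = F (S N (T c) + S N c) := by
          rw [hSsum c, ← two_smul ℝ (S (k+1) c), hFsmul]
          norm_num
        rw [e1, two_mul]
        exact le_trans (hFadd _ _) (add_le_add le_sup_right le_sup_left)
      have ht2 : t ≤ F (S N c) ⊔ F (S N (T c)) :=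
        (ENNReal.mul_le_mul_iff_right two_ne_zero ENNReal.ofNat_ne_top).1
          (le_trans (mul_le_mul_right hct 2) hkey)
      rcases le_sup_iff.1 ht2 with h | h
      · exact Or.inl ⟨hc, h⟩
      · exact Or.inr ⟨hc, h⟩
    calc π (B k) ≤ π ((B k ∩ E) ∪ (B k ∩ T ⁻¹' E)) := measure_mono hmain
      _ ≤ π (B k ∩ E) + π (B k ∩ T ⁻¹' E) := measure_union_le _ _
      _ = π (B k ∩ E) + π (B k ∩ E) := by
          congr 1
          have hpre : B k ∩ T ⁻¹' E = T ⁻¹' (B k ∩ E) := by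
            rw [Set.preimage_inter, hTB]
          rw [hpre, ← Measure.map_apply hTmeas ((hBmeas k).inter hEmeas), hT,
            hπflip e he1]
      _ = 2 * π (B k ∩ E) := (two_mul _).symm
  rw [hLHS, hRHS, hsign]
  calc π Aβ ≤ π (⋃ k ∈ Finset.range N, B k) :=
        measure_mono (Set.Subset.trans hsub hUsub)
    _ = ∑ k ∈ Finset.range N, π (B k) :=
        measure_biUnion_finset hdisj (fun k _ => hBmeas k)
    _ ≤ ∑ k ∈ Finset.range N, 2 * π (B k ∩ E) := Finset.sum_le_sum hrefl
    _ = 2 * ∑ k ∈ Finset.range N, π (B k ∩ E) := by rw [Finset.mul_sum]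
    _ ≤ 2 * π E := by
        refine mul_le_mul_right ?_ 2
        rw [← measure_biUnion_finset (hdisj.mono fun k => Set.inter_subset_left)
          (fun k _ => (hBmeas k).inter hEmeas)]
        exact measure_mono (Set.iUnion₂_subset fun k _ => Set.inter_subset_right)
end

section
/- Let Q_n(θ) = ∑_{k=2^n}^{2^{n+1}-1} a_k ξ_k e(kθ) with ξ_k i.i.d. standard complex Gaussians, a_k ≥ 0, σ_n² = ∑_{k=2^n}^{2^{n+1}-1} a_k², and ρ_n(θ) = σ_n^{-2}|E[Q_n(θ) conj(Q_n(0))]| (when σ_n > 0). Then 1 - ρ_n(θ)² ≤ C · 2^{2n} θ² for all θ ∈ [-1,1] and an absolute constant C > 1. -/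
open Complex Real

theorem stmt9 :
    ∃ C : ℝ, 1 < C ∧
      ∀ (n : ℕ) (a : ℕ → ℝ), (∀ k, 0 ≤ a k) →
        ∀ θ : ℝ, θ ∈ Set.Icc (-1 : ℝ) 1 →
          let σ2 : ℝ := ∑ k ∈ Finset.Ico (2 ^ n) (2 ^ (n + 1)), a k ^ 2
          -- `ρ_n(θ) = σ_n^{-2} |E[Q_n(θ) conj(Q_n(0))]|`, where the covariance is
          -- `∑_{k=2^n}^{2^{n+1}-1} a_k² e(kθ)`
          let ρ : ℝ := ‖∑ k ∈ Finset.Ico (2 ^ n) (2 ^ (n + 1)),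
            ((a k ^ 2 : ℝ) : ℂ) * Complex.exp (2 * π * I * k * θ)‖ / σ2
          0 < σ2 →
            1 - ρ ^ 2 ≤ C * 2 ^ (2 * n) * θ ^ 2 := by
  refine ⟨160, by norm_num, ?_⟩
  intro n a ha θ hθ σ2 ρ hσ
  set S := Finset.Ico (2 ^ n) (2 ^ (n + 1)) with hS
  set z : ℂ := ∑ k ∈ S, ((a k ^ 2 : ℝ) : ℂ) * Complex.exp (2 * π * I * k * θ) with hz
  have hterm : ∀ k : ℕ, ((a k ^ 2 : ℝ) : ℂ) * Complex.exp (2 * π * I * k * θ)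
      = ((a k ^ 2 : ℝ) : ℂ) * Complex.exp (((2 * π * k * θ : ℝ) : ℂ) * I) := by
    intro k; congr 1; congr 1; push_cast; ring
  -- ρ ≤ 1
  have habs_le : ‖z‖ ≤ σ2 := by
    calc ‖z‖ ≤ ∑ k ∈ S, ‖((a k ^ 2 : ℝ) : ℂ) *
        Complex.exp (2 * π * I * k * θ)‖ := norm_sum_le _ _
      _ = ∑ k ∈ S, a k ^ 2 := by
          refine Finset.sum_congr rfl fun k _ => ?_
          rw [hterm k, norm_mul, Complex.norm_exp_ofReal_mul_I, mul_one,
            Complex.norm_real, Real.norm_eq_abs, _root_.abs_of_nonneg (sq_nonneg (a k))]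
      _ = σ2 := rfl
  have hρ_le : ρ ≤ 1 := by
    rw [show ρ = ‖z‖ / σ2 from rfl, div_le_one hσ]; exact habs_le
  have hρ_nonneg : 0 ≤ ρ := div_nonneg (norm_nonneg _) hσ.le
  -- lower bound on abs via real part
  have hre : z.re = ∑ k ∈ S, a k ^ 2 * Real.cos (2 * π * k * θ) := by
    rw [hz, Complex.re_sum]
    refine Finset.sum_congr rfl fun k _ => ?_
    rw [hterm k, Complex.re_ofReal_mul, Complex.exp_ofReal_mul_I_re]
  have habs_ge : ∑ k ∈ S, a k ^ 2 * Real.cos (2 * π * k * θ) ≤ ‖z‖ := by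
    rw [← hre]; exact Complex.re_le_norm z
  -- key: 1 - ρ ≤ σ2⁻¹ ∑ a k ^2 (1 - cos)
  have hcos : ∀ k ∈ S, a k ^ 2 * (1 - Real.cos (2 * π * k * θ))
      ≤ a k ^ 2 * (8 * π ^ 2 * 2 ^ (2 * n) * θ ^ 2) := by
    intro k hk
    refine mul_le_mul_of_nonneg_left ?_ (sq_nonneg _)
    have h1 : 1 - Real.cos (2 * π * k * θ) ≤ (2 * π * k * θ) ^ 2 / 2 := by
      have := Real.one_sub_sq_div_two_le_cos (x := 2 * π * k * θ)
      linarith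
    refine h1.trans ?_
    have hk2 : (k : ℝ) ≤ 2 ^ (n + 1) := by
      have := (Finset.mem_Ico.mp hk).2
      exact_mod_cast (by push_cast; exact_mod_cast this.le : (k : ℝ) ≤ ((2 ^ (n + 1) : ℕ) : ℝ))
    have hknn : (0:ℝ) ≤ (k:ℝ) := Nat.cast_nonneg k
    have hsq : ((k:ℝ) * θ) ^ 2 ≤ (2 ^ (n + 1)) ^ 2 * θ ^ 2 := by
      rw [mul_pow]
      exact mul_le_mul_of_nonneg_right (by nlinarith) (sq_nonneg θ)
    have hpow : ((2:ℝ) ^ (n + 1)) ^ 2 = 4 * 2 ^ (2 * n) := by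
      rw [← pow_mul, show (n + 1) * 2 = 2 * n + 2 by ring, pow_add]; ring
    have hsq' : ((k:ℝ) * θ) ^ 2 ≤ 4 * 2 ^ (2 * n) * θ ^ 2 := by
      rw [hpow] at hsq; linarith
    nlinarith [mul_le_mul_of_nonneg_left hsq' (sq_nonneg π)]
  have hsum : σ2 - ∑ k ∈ S, a k ^ 2 * Real.cos (2 * π * k * θ)
      ≤ 8 * π ^ 2 * 2 ^ (2 * n) * θ ^ 2 * σ2 := by
    have : ∑ k ∈ S, a k ^ 2 * (1 - Real.cos (2 * π * k * θ))
        ≤ ∑ k ∈ S, a k ^ 2 * (8 * π ^ 2 * 2 ^ (2 * n) * θ ^ 2) :=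
      Finset.sum_le_sum hcos
    calc σ2 - ∑ k ∈ S, a k ^ 2 * Real.cos (2 * π * k * θ)
        = ∑ k ∈ S, a k ^ 2 * (1 - Real.cos (2 * π * k * θ)) := by
          rw [show σ2 = ∑ k ∈ S, a k ^ 2 from rfl, ← Finset.sum_sub_distrib]
          exact Finset.sum_congr rfl fun k _ => by ring
      _ ≤ ∑ k ∈ S, a k ^ 2 * (8 * π ^ 2 * 2 ^ (2 * n) * θ ^ 2) := this
      _ = 8 * π ^ 2 * 2 ^ (2 * n) * θ ^ 2 * σ2 := by
          rw [← Finset.sum_mul, show σ2 = ∑ k ∈ S, a k ^ 2 from rfl]; ring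
  have h1ρ : 1 - ρ ≤ 8 * π ^ 2 * 2 ^ (2 * n) * θ ^ 2 := by
    have hρσ : ρ * σ2 = ‖z‖ := div_mul_cancel₀ _ hσ.ne'
    have hmul : (1 - ρ) * σ2 ≤ 8 * π ^ 2 * 2 ^ (2 * n) * θ ^ 2 * σ2 := by
      nlinarith [habs_ge, hsum]
    exact le_of_mul_le_mul_right hmul hσ
  have hpisq : π ^ 2 ≤ 10 := by nlinarith [Real.pi_lt_d2, Real.pi_pos]
  have hpow_nonneg : (0:ℝ) ≤ (2:ℝ) ^ (2 * n) := by positivity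
  nlinarith [sq_nonneg θ, mul_nonneg hpow_nonneg (sq_nonneg θ)]
end

section
/- Suppose (σ_n²)_{n≥0} is a nonnegative sequence with ∑_{k=0}^∞ sup_{n≥k} σ_n² = ∞ but ∑_{n=0}^∞ σ_n² < ∞. Then for any C > 1 there exists a strictly increasing sequence (j_k) of positive integers with j_{k+1}/j_k > C for all k and ∑_{k=1}^∞ σ_{j_k}² · j_k = ∞. -/
theorem stmt12 (σsq : ℕ → ℝ) (hnonneg : ∀ n, 0 ≤ σsq n)
    (hsum : Summable σsq)
    (htail : ¬ Summable (fun k => ⨆ n : {n : ℕ // k ≤ n}, σsq n)) :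
    ∀ C : ℝ, 1 < C →
      ∃ j : ℕ → ℕ, StrictMono j ∧ (∀ k, 0 < j k) ∧
        (∀ k, C * (j k : ℝ) < (j (k + 1) : ℝ)) ∧
        ¬ Summable (fun k => σsq (j k) * (j k : ℝ)) := by
  intro C hC
  set τ : ℕ → ℝ := fun k => ⨆ n : {n : ℕ // k ≤ n}, σsq n with hτdef
  have hbdd : ∀ k, BddAbove (Set.range fun n : {n : ℕ // k ≤ n} => σsq n) := by
    intro k
    refine ⟨∑' n, σsq n, ?_⟩
    rintro x ⟨n, rfl⟩
    exact Summable.le_tsum hsum _ fun m _ => hnonneg m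
  have hτ_le : ∀ k n, k ≤ n → σsq n ≤ τ k := fun k n h => le_ciSup (hbdd k) ⟨n, h⟩
  have hτ_nonneg : ∀ k, 0 ≤ τ k := fun k => (hnonneg k).trans (hτ_le k k le_rfl)
  have hτ_anti : ∀ {k l : ℕ}, k ≤ l → τ l ≤ τ k := by
    intro k l hkl
    exact ciSup_le fun n => hτ_le k n (hkl.trans n.2)
  -- the sup is attained
  have hattain : ∀ k, ∃ n, k ≤ n ∧ σsq n = τ k := by
    intro k
    rcases eq_or_lt_of_le (hτ_nonneg k) with h0 | hpos
    · refine ⟨k, le_rfl, le_antisymm (hτ_le k k le_rfl) ?_⟩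
      rw [← h0]; exact hnonneg k
    · have htend := hsum.tendsto_atTop_zero
      have hev : ∀ᶠ n in Filter.atTop, σsq n < τ k / 2 :=
        htend.eventually_lt_const (half_pos hpos)
      obtain ⟨N, hN⟩ := Filter.eventually_atTop.mp hev
      set N' := max N k with hN'def
      have hne : (Finset.Icc k N').Nonempty := ⟨k, Finset.mem_Icc.mpr ⟨le_rfl, le_max_right N k⟩⟩
      obtain ⟨n₀, hn₀mem, hn₀max⟩ := Finset.exists_max_image (Finset.Icc k N') σsq hne
      have hn₀k : k ≤ n₀ := (Finset.mem_Icc.mp hn₀mem).1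
      have hle : τ k ≤ max (σsq n₀) (τ k / 2) := by
        refine ciSup_le fun m => ?_
        rcases le_or_gt (m : ℕ) N' with hm | hm
        · exact le_max_of_le_left (hn₀max m (Finset.mem_Icc.mpr ⟨m.2, hm⟩))
        · exact le_max_of_le_right (hN m ((le_max_left N k).trans hm.le)).le
      have : τ k ≤ σsq n₀ := by
        rcases max_cases (σsq n₀) (τ k / 2) with ⟨heq, _⟩ | ⟨heq, _⟩
        · rwa [heq] at hle
        · rw [heq] at hle; linarith
      exact ⟨n₀, hn₀k, le_antisymm (hτ_le k n₀ hn₀k) this⟩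
  choose nn hnn hnn' using hattain
  -- N j attains the sup of the tail from 2^j
  set N : ℕ → ℕ := fun j => nn (2 ^ j) with hNdef
  have hN_ge : ∀ j, 2 ^ j ≤ N j := fun j => hnn (2 ^ j)
  have hN_eq : ∀ j, σsq (N j) = τ (2 ^ j) := fun j => hnn' (2 ^ j)
  have hN_pos : ∀ j, 0 < N j := fun j => lt_of_lt_of_le (pow_pos two_pos j) (hN_ge j)
  -- condensation: the condensed series of τ diverges
  have hcond : ¬ Summable (fun j : ℕ => (2 : ℝ) ^ j * τ (2 ^ j)) := by
    intro h
    exact htail ((summable_condensed_iff_of_nonneg hτ_nonneg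
      (fun m n _ hmn => hτ_anti hmn)).mp h)
  -- greedy selection
  have hex : ∀ m : ℕ, ∃ j, m < j ∧ C * (N m : ℝ) < (N j : ℝ) := by
    intro m
    obtain ⟨j₀, hj₀⟩ := pow_unbounded_of_one_lt (C * (N m : ℝ)) one_lt_two
    refine ⟨max j₀ (m + 1), lt_of_lt_of_le (Nat.lt_succ_self m) (le_max_right _ _), ?_⟩
    calc C * (N m : ℝ) < 2 ^ j₀ := hj₀
      _ ≤ 2 ^ max j₀ (m + 1) := by
          exact pow_le_pow_right₀ one_le_two (le_max_left _ _)
      _ = ((2 ^ max j₀ (m + 1) : ℕ) : ℝ) := by push_cast; ring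
      _ ≤ (N (max j₀ (m + 1)) : ℝ) := by exact_mod_cast hN_ge _
  set g : ℕ → ℕ := fun k => Nat.rec 0 (fun _ gk => Nat.find (hex gk)) k with hgdef
  have hg0 : g 0 = 0 := rfl
  have hgsucc : ∀ k, g (k + 1) = Nat.find (hex (g k)) := fun k => rfl
  have hg_lt : ∀ k, g k < g (k + 1) := fun k => (Nat.find_spec (hex (g k))).1
  have hg_spec : ∀ k, C * (N (g k) : ℝ) < (N (g (k + 1)) : ℝ) :=
    fun k => (Nat.find_spec (hex (g k))).2
  have hg_min : ∀ k j, g k < j → j < g (k + 1) → (N j : ℝ) ≤ C * (N (g k) : ℝ) := by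
    intro k j h1 h2
    have := Nat.find_min (hex (g k)) h2
    push_neg at this
    exact this h1
  have hg_mono : StrictMono g := strictMono_nat_of_lt_succ hg_lt
  refine ⟨fun k => N (g k), ?_, fun k => hN_pos (g k), fun k => hg_spec k, ?_⟩
  · apply strictMono_nat_of_lt_succ
    intro k
    have h1 : (N (g k) : ℝ) < (N (g (k + 1)) : ℝ) := by
      have : (N (g k) : ℝ) ≤ C * (N (g k) : ℝ) :=
        le_mul_of_one_le_left (Nat.cast_nonneg _) hC.le
      linarith [hg_spec k]
    exact_mod_cast h1
  · intro hsumm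
    apply hcond
    -- block bound
    have hblock : ∀ k, ∑ j ∈ Finset.Ico (g k) (g (k + 1)), (2 : ℝ) ^ j * τ (2 ^ j)
        ≤ 2 * C * (σsq (N (g k)) * (N (g k) : ℝ)) := by
      intro k
      have hτgk : 0 ≤ τ (2 ^ g k) := hτ_nonneg _
      have step1 : ∑ j ∈ Finset.Ico (g k) (g (k + 1)), (2 : ℝ) ^ j * τ (2 ^ j)
          ≤ ∑ j ∈ Finset.Ico (g k) (g (k + 1)), (2 : ℝ) ^ j * τ (2 ^ g k) := by
        refine Finset.sum_le_sum fun j hj => ?_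
        have hjk : g k ≤ j := (Finset.mem_Ico.mp hj).1
        exact mul_le_mul_of_nonneg_left (hτ_anti (Nat.pow_le_pow_right (by norm_num) hjk))
          (by positivity)
      have step2 : ∑ j ∈ Finset.Ico (g k) (g (k + 1)), (2 : ℝ) ^ j
          ≤ (2 : ℝ) ^ g (k + 1) := by
        calc ∑ j ∈ Finset.Ico (g k) (g (k + 1)), (2 : ℝ) ^ j
            ≤ ∑ j ∈ Finset.range (g (k + 1)), (2 : ℝ) ^ j := by
              refine Finset.sum_le_sum_of_subset_of_nonneg ?_ (fun j _ _ => by positivity)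
              intro j hj
              exact Finset.mem_range.mpr (Finset.mem_Ico.mp hj).2
          _ = ((2 : ℝ) ^ g (k + 1) - 1) / (2 - 1) := geom_sum_eq (by norm_num) _
          _ ≤ (2 : ℝ) ^ g (k + 1) := by norm_num
      -- 2 ^ (g (k+1) - 1) ≤ C * N (g k)
      have hb : g (k + 1) = (g (k + 1) - 1) + 1 := by have := hg_lt k; omega
      set j0 := g (k + 1) - 1 with hj0def
      have hj0ge : g k ≤ j0 := by have := hg_lt k; omega
      have hj0lt : j0 < g (k + 1) := by have := hg_lt k; omega
      have hkey : (2 : ℝ) ^ j0 ≤ C * (N (g k) : ℝ) := by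
        rcases eq_or_lt_of_le hj0ge with heq | hlt
        · have h1 : (2 : ℝ) ^ j0 ≤ (N j0 : ℝ) := by
            calc (2 : ℝ) ^ j0 = ((2 ^ j0 : ℕ) : ℝ) := by push_cast; ring
              _ ≤ (N j0 : ℝ) := by exact_mod_cast hN_ge j0
          calc (2 : ℝ) ^ j0 ≤ (N j0 : ℝ) := h1
            _ = (N (g k) : ℝ) := by rw [← heq]
            _ ≤ C * (N (g k) : ℝ) := le_mul_of_one_le_left (Nat.cast_nonneg _) hC.le
        · calc (2 : ℝ) ^ j0 = ((2 ^ j0 : ℕ) : ℝ) := by push_cast; ring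
            _ ≤ (N j0 : ℝ) := by exact_mod_cast hN_ge j0
            _ ≤ C * (N (g k) : ℝ) := hg_min k j0 hlt hj0lt
      have step3 : (2 : ℝ) ^ g (k + 1) ≤ 2 * (C * (N (g k) : ℝ)) := by
        rw [hb, pow_succ]
        nlinarith [hkey]
      calc ∑ j ∈ Finset.Ico (g k) (g (k + 1)), (2 : ℝ) ^ j * τ (2 ^ j)
          ≤ ∑ j ∈ Finset.Ico (g k) (g (k + 1)), (2 : ℝ) ^ j * τ (2 ^ g k) := step1
        _ = (∑ j ∈ Finset.Ico (g k) (g (k + 1)), (2 : ℝ) ^ j) * τ (2 ^ g k) := by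
            rw [Finset.sum_mul]
        _ ≤ (2 : ℝ) ^ g (k + 1) * τ (2 ^ g k) :=
            mul_le_mul_of_nonneg_right step2 hτgk
        _ ≤ 2 * (C * (N (g k) : ℝ)) * τ (2 ^ g k) :=
            mul_le_mul_of_nonneg_right step3 hτgk
        _ = 2 * C * (σsq (N (g k)) * (N (g k) : ℝ)) := by rw [hN_eq (g k)]; ring
    -- splitting partial sums into blocks
    have hsplit : ∀ K, ∑ j ∈ Finset.range (g K), (2 : ℝ) ^ j * τ (2 ^ j)
        = ∑ k ∈ Finset.range K, ∑ j ∈ Finset.Ico (g k) (g (k + 1)), (2 : ℝ) ^ j * τ (2 ^ j) := by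
      intro K
      induction K with
      | zero => simp [hg0]
      | succ K ih =>
        rw [Finset.sum_range_succ, ← ih, Finset.range_eq_Ico, Finset.range_eq_Ico]
        exact (Finset.sum_Ico_consecutive _ (Nat.zero_le _) (hg_lt K).le).symm
    have hanonneg : ∀ k, 0 ≤ σsq (N (g k)) * (N (g k) : ℝ) :=
      fun k => mul_nonneg (hnonneg _) (Nat.cast_nonneg _)
    refine summable_of_sum_range_le (c := 2 * C * ∑' k, σsq (N (g k)) * (N (g k) : ℝ))
      (fun j => mul_nonneg (by positivity) (hτ_nonneg _)) ?_
    intro J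
    calc ∑ j ∈ Finset.range J, (2 : ℝ) ^ j * τ (2 ^ j)
        ≤ ∑ j ∈ Finset.range (g J), (2 : ℝ) ^ j * τ (2 ^ j) := by
          refine Finset.sum_le_sum_of_subset_of_nonneg ?_
            (fun j _ _ => mul_nonneg (by positivity) (hτ_nonneg _))
          exact Finset.range_subset_range.mpr (hg_mono.le_apply)
      _ = ∑ k ∈ Finset.range J, ∑ j ∈ Finset.Ico (g k) (g (k + 1)), (2 : ℝ) ^ j * τ (2 ^ j) :=
          hsplit J
      _ ≤ ∑ k ∈ Finset.range J, 2 * C * (σsq (N (g k)) * (N (g k) : ℝ)) :=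
          Finset.sum_le_sum fun k _ => hblock k
      _ = 2 * C * ∑ k ∈ Finset.range J, σsq (N (g k)) * (N (g k) : ℝ) := by
          rw [Finset.mul_sum]
      _ ≤ 2 * C * ∑' k, σsq (N (g k)) * (N (g k) : ℝ) := by
          refine mul_le_mul_of_nonneg_left ?_ (by linarith)
          exact Summable.sum_le_tsum _ (fun k _ => hanonneg k) hsumm
end

section
/- Let (τ_k²)_{k≥0} be a nonincreasing nonnegative sequence. Then ∑_{k=0}^∞ √( (∑_{n≥k} τ_n⁴) / k ) ≲ ∑_{k=0}^∞ τ_k² , i.e. there is an absolute constant C such that the left side is at most C times the right side (interpreting the k=0 term appropriately, e.g. starting the sum at k=1). -/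
open ENNReal

namespace Stmt13Aux



lemma finset_rpow_half_le (s : Finset ℕ) (x : ℕ → ℝ≥0∞) :
    (∑ i ∈ s, x i) ^ ((1:ℝ)/2) ≤ ∑ i ∈ s, (x i) ^ ((1:ℝ)/2) := by
  classical
  induction s using Finset.induction_on with
  | empty => simp [ENNReal.zero_rpow_of_pos]
  | @insert a s ha ih =>
      rw [Finset.sum_insert ha, Finset.sum_insert ha]
      exact le_trans (ENNReal.rpow_add_le_add_rpow _ _ (by norm_num) (by norm_num))
        (add_le_add_right ih _)

lemma tsum_rpow_half_le (x : ℕ → ℝ≥0∞) :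
    (∑' i, x i) ^ ((1:ℝ)/2) ≤ ∑' i, (x i) ^ ((1:ℝ)/2) := by
  rw [one_div, ENNReal.rpow_inv_le_iff (by norm_num : (0:ℝ) < 2)]
  rw [ENNReal.tsum_eq_iSup_sum]
  refine iSup_le fun s => ?_
  calc ∑ i ∈ s, x i = ((∑ i ∈ s, x i) ^ ((2:ℝ)⁻¹)) ^ (2:ℝ) := by
        rw [← ENNReal.rpow_mul]; norm_num
    _ ≤ (∑ i ∈ s, (x i) ^ ((2:ℝ)⁻¹)) ^ (2:ℝ) := by
        have := finset_rpow_half_le s x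
        rw [one_div] at this
        exact ENNReal.rpow_le_rpow this (by norm_num)
    _ ≤ (∑' i, (x i) ^ ((2:ℝ)⁻¹)) ^ (2:ℝ) :=
        ENNReal.rpow_le_rpow (ENNReal.sum_le_tsum s) (by norm_num)




lemma pow_inj {m1 r1 m2 r2 : ℕ} (h1 : r1 < 2^m1) (h2 : r2 < 2^m2)
    (h : 2^m1 + r1 = 2^m2 + r2) : m1 = m2 := by
  rcases lt_trichotomy m1 m2 with hlt | heq | hgt
  · have : 2^(m1+1) ≤ 2^m2 := Nat.pow_le_pow_right (by norm_num) hlt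
    rw [pow_succ] at this; omega
  · exact heq
  · have : 2^(m2+1) ≤ 2^m1 := Nat.pow_le_pow_right (by norm_num) hgt
    rw [pow_succ] at this; omega

lemma block (u : ℕ → ℝ≥0∞) (hu : ∀ m n : ℕ, 1 ≤ m → m ≤ n → u n ≤ u m) (j : ℕ) :
    ∑' n : ℕ, u (2 ^ j + n) ≤ ∑' i : ℕ, 2 ^ (j + i) * u (2 ^ (j + i)) := by
  set L : ℕ → ℕ := fun n => Nat.log 2 (2^j + n) with hL
  have hjL : ∀ n, j ≤ L n := by
    intro n
    have h1 : Nat.log 2 (2^j) ≤ L n := Nat.log_mono_right (Nat.le_add_right _ _)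
    rwa [Nat.log_pow (by norm_num)] at h1
  have hL1 : ∀ n, 2 ^ (L n) ≤ 2^j + n := fun n =>
    Nat.pow_log_le_self 2 (by positivity)
  have hL2 : ∀ n, 2^j + n < 2 ^ (L n) + 2 ^ (L n) := by
    intro n
    have := Nat.lt_pow_succ_log_self (by norm_num : 1 < 2) (2^j + n)
    rwa [pow_succ, mul_two] at this
  have hfin : ∀ n, 2^j + n - 2^(L n) < 2 ^ (j + (L n - j)) := by
    intro n
    have he : j + (L n - j) = L n := by have := hjL n; omega
    rw [he]
    have := hL2 n; have := hL1 n; omega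
  set H : ℕ → Σ i : ℕ, Fin (2 ^ (j + i)) := fun n =>
    ⟨L n - j, ⟨2^j + n - 2^(L n), hfin n⟩⟩ with hH
  have Hinj : Function.Injective H := by
    intro a b hab
    have h1 : L a - j = L b - j := congrArg Sigma.fst hab
    have hLab : L a = L b := by have := hjL a; have := hjL b; omega
    have h2 : 2^j + a - 2^(L a) = 2^j + b - 2^(L b) :=
      congrArg (fun p : (Σ i : ℕ, Fin (2 ^ (j + i))) => (p.2 : ℕ)) hab
    have ha1 := hL1 a; have hb1 := hL1 b
    rw [hLab] at h2 ha1
    omega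
  calc ∑' n, u (2^j + n)
      ≤ ∑' n, (fun p : Σ i : ℕ, Fin (2^(j+i)) => u (2^(j + p.1))) (H n) := by
        refine ENNReal.tsum_le_tsum fun n => ?_
        simp only [hH]
        have he : j + (L n - j) = L n := by have := hjL n; omega
        rw [he]
        exact hu _ _ (Nat.one_le_two_pow) (hL1 n)
    _ ≤ ∑' p : Σ i : ℕ, Fin (2^(j+i)), u (2^(j + p.1)) :=
        ENNReal.tsum_comp_le_tsum_of_injective Hinj _
    _ = ∑' i : ℕ, ∑' r : Fin (2^(j+i)), u (2^(j+i)) := ENNReal.tsum_sigma' _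
    _ = ∑' i : ℕ, 2^(j+i) * u (2^(j+i)) := by
        refine tsum_congr fun i => ?_
        rw [tsum_fintype]
        simp [Finset.sum_const, nsmul_eq_mul]

lemma cond (g : ℕ → ℝ≥0∞) (hg : ∀ m n : ℕ, m ≤ n → g n ≤ g m) :
    ∑' m : ℕ, 2 ^ m * g (2 ^ m) ≤ 3 * ∑' n, g n := by
  have split : ∑' m : ℕ, 2^m * g (2^m)
      = 2^0 * g (2^0) + ∑' m : ℕ, 2^(m+1) * g (2^(m+1)) :=
    tsum_eq_zero_add' ENNReal.summable
  have Kinj : Function.Injective (fun p : Σ m : ℕ, Fin (2^m) => 2^p.1 + (p.2 : ℕ)) := by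
    rintro ⟨m1, r1⟩ ⟨m2, r2⟩ h
    simp only at h
    have hm : m1 = m2 := pow_inj r1.2 r2.2 h
    subst hm
    have : r1 = r2 := Fin.ext (by omega)
    rw [this]
  have h2 : ∑' m : ℕ, 2^(m+1) * g (2^(m+1)) ≤ 2 * ∑' n, g n := by
    calc ∑' m : ℕ, 2^(m+1) * g (2^(m+1))
        ≤ ∑' m : ℕ, 2 * ∑' r : Fin (2^m), g (2^m + r) := by
          refine ENNReal.tsum_le_tsum fun m => ?_
          rw [tsum_fintype]
          have hcard : (∑ _r : Fin (2^m), g (2^(m+1))) = (2^m : ℝ≥0∞) * g (2^(m+1)) := by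
            simp [Finset.sum_const, nsmul_eq_mul]
          calc (2:ℝ≥0∞)^(m+1) * g (2^(m+1)) = 2 * ∑ _r : Fin (2^m), g (2^(m+1)) := by
                rw [hcard, pow_succ]; ring
            _ ≤ 2 * ∑ r : Fin (2^m), g (2^m + r) := by
                gcongr with r
                exact hg _ _ (by have hr := r.2; rw [pow_succ]; omega)
      _ = 2 * ∑' p : Σ m : ℕ, Fin (2^m), g (2^p.1 + p.2) := by
          rw [ENNReal.tsum_sigma', ENNReal.tsum_mul_left]
      _ ≤ 2 * ∑' n, g n := by
          gcongr
          exact ENNReal.tsum_comp_le_tsum_of_injective Kinj g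
  rw [split]
  have h1 : (2:ℝ≥0∞)^0 * g (2^0) ≤ ∑' n, g n := by
    simpa using ENNReal.le_tsum 1
  calc 2^0 * g (2^0) + ∑' m : ℕ, 2^(m+1) * g (2^(m+1))
      ≤ ∑' n, g n + 2 * ∑' n, g n := add_le_add h1 h2
    _ = 3 * ∑' n, g n := by ring




lemma core (g : ℕ → ℝ≥0∞) (hg : ∀ m n : ℕ, m ≤ n → g n ≤ g m) :
    ∑' k : ℕ, ((∑' n : ℕ, (g (k+1+n))^2) / ((k:ℝ≥0∞)+1)) ^ ((1:ℝ)/2)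
      ≤ 12 * ∑' k, g k := by
  classical
  set s : ℝ≥0∞ := (2:ℝ≥0∞) ^ ((1:ℝ)/2) with hs
  have hs_ne_top : s ≠ ⊤ :=
    ENNReal.rpow_ne_top_of_nonneg (by norm_num) ENNReal.ofNat_ne_top
  have hs_ne_zero : s ≠ 0 :=
    (ENNReal.rpow_pos (by norm_num) ENNReal.ofNat_ne_top).ne'
  have hss : s * s = 2 := by
    rw [hs, ← ENNReal.rpow_add _ _ (by norm_num) ENNReal.ofNat_ne_top]
    norm_num
  have hs_le_two : s ≤ 2 := by
    rw [hs]
    calc (2:ℝ≥0∞) ^ ((1:ℝ)/2) ≤ 2 ^ (1:ℝ) :=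
          ENNReal.rpow_le_rpow_of_exponent_le one_le_two (by norm_num)
      _ = 2 := ENNReal.rpow_one 2
  set E : ℝ≥0∞ := ∑' m : ℕ, 2 ^ m * g (2 ^ m) with hE
  set A : ℕ → ℝ≥0∞ := fun m => ∑' n : ℕ, (g (m+n))^2 with hA
  have hAanti : ∀ m n : ℕ, m ≤ n → A n ≤ A m := by
    intro m n hmn
    calc A n = ∑' t : ℕ, (fun t => (g (m+t))^2) ((n-m)+t) := by
          refine tsum_congr fun t => ?_
          simp only
          congr 2
          omega
      _ ≤ A m := ENNReal.tsum_comp_le_tsum_of_injective (add_right_injective (n-m)) _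
  set v : ℕ → ℝ≥0∞ := fun m => (A m / (m:ℝ≥0∞)) ^ ((1:ℝ)/2) with hv
  have hvanti : ∀ m n : ℕ, 1 ≤ m → m ≤ n → v n ≤ v m := by
    intro m n _ hmn
    refine ENNReal.rpow_le_rpow ?_ (by norm_num)
    exact ENNReal.div_le_div (hAanti m n hmn) (Nat.cast_le.mpr hmn)
  have h2i : ∀ i : ℕ, ((2:ℝ≥0∞)^i) ^ ((1:ℝ)/2) = s^i := by
    intro i
    rw [← ENNReal.rpow_natCast 2 i, ← ENNReal.rpow_mul, mul_comm, ENNReal.rpow_mul,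
      ENNReal.rpow_natCast]
  have hLHS : ∑' k : ℕ, ((∑' n : ℕ, (g (k+1+n))^2) / ((k:ℝ≥0∞)+1)) ^ ((1:ℝ)/2)
      = ∑' k : ℕ, v (2^0 + k) := by
    refine tsum_congr fun k => ?_
    simp only [hv, hA, pow_zero]
    congr 2
    · exact tsum_congr fun n => by congr 2; omega
    · push_cast; ring
  rw [hLHS]
  have geom : ∑' l : ℕ, (s * 2⁻¹)^l ≤ 4 := by
    have hr1 : s * 2⁻¹ ≤ 1 := by
      calc s * 2⁻¹ ≤ 2 * 2⁻¹ := mul_le_mul_left hs_le_two _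
        _ = 1 := ENNReal.mul_inv_cancel (by norm_num) ENNReal.ofNat_ne_top
    have hr2 : (s * 2⁻¹)^2 = 2⁻¹ := by
      calc (s * 2⁻¹)^2 = (s*s) * (2⁻¹ * 2⁻¹) := by ring
        _ = 2⁻¹ := by
            rw [hss, ← mul_assoc, ENNReal.mul_inv_cancel (by norm_num) ENNReal.ofNat_ne_top,
              one_mul]
    have hgeo : ∑' l : ℕ, ((2:ℝ≥0∞)⁻¹)^l = 2 := by
      rw [ENNReal.tsum_geometric, ENNReal.one_sub_inv_two, inv_inv]
    calc ∑' l : ℕ, (s * 2⁻¹)^l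
        = (∑' l : ℕ, (s * 2⁻¹)^(2*l)) + ∑' l : ℕ, (s * 2⁻¹)^(2*l+1) :=
          (tsum_even_add_odd ENNReal.summable ENNReal.summable).symm
      _ ≤ 2 + 2 := by
          gcongr
          · refine le_of_eq ?_
            calc ∑' l : ℕ, (s * 2⁻¹)^(2*l) = ∑' l : ℕ, ((2:ℝ≥0∞)⁻¹)^l :=
                  tsum_congr fun l => by rw [pow_mul, hr2]
              _ = 2 := hgeo
          · calc ∑' l : ℕ, (s * 2⁻¹)^(2*l+1)
                ≤ ∑' l : ℕ, ((2:ℝ≥0∞)⁻¹)^l * 1 := by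
                  refine ENNReal.tsum_le_tsum fun l => ?_
                  rw [pow_succ, pow_mul, hr2]
                  exact mul_le_mul_right hr1 _
              _ = 2 := by simp only [mul_one]; exact hgeo
      _ = 4 := by norm_num
  have hinner : ∀ l : ℕ, ∑' i : ℕ, 2^i * g (2^(i+l)) ≤ ((2:ℝ≥0∞)^l)⁻¹ * E := by
    intro l
    have h1 : (2:ℝ≥0∞)^l * ∑' i : ℕ, 2^i * g (2^(i+l)) = ∑' i : ℕ, 2^(i+l) * g (2^(i+l)) := by
      rw [← ENNReal.tsum_mul_left]
      exact tsum_congr fun i => by rw [pow_add]; ring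
    have h2 : ∑' i : ℕ, (fun m => (2:ℝ≥0∞)^m * g (2^m)) (i + l) ≤ E :=
      ENNReal.tsum_comp_le_tsum_of_injective (add_left_injective l) _
    calc ∑' i : ℕ, 2^i * g (2^(i+l))
        = ((2:ℝ≥0∞)^l)⁻¹ * ((2:ℝ≥0∞)^l * ∑' i : ℕ, 2^i * g (2^(i+l))) := by
          rw [← mul_assoc, ENNReal.inv_mul_cancel (by positivity) (by simp [ENNReal.pow_ne_top ENNReal.ofNat_ne_top]), one_mul]
      _ ≤ ((2:ℝ≥0∞)^l)⁻¹ * E := by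
          refine mul_le_mul_right ?_ _
          rw [h1]
          exact h2
  calc ∑' k : ℕ, v (2^0 + k)
      ≤ ∑' i : ℕ, 2^(0+i) * v (2^(0+i)) := block v hvanti 0
    _ = ∑' i : ℕ, 2^i * v (2^i) := by simp
    _ ≤ ∑' i : ℕ, s^i * (A (2^i)) ^ ((1:ℝ)/2) := by
        refine ENNReal.tsum_le_tsum fun i => ?_
        have hcast : ((2^i : ℕ) : ℝ≥0∞) = (2:ℝ≥0∞)^i := by push_cast; ring
        have hv2 : v (2^i) = (A (2^i)) ^ ((1:ℝ)/2) / s^i := by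
          rw [hv]
          simp only
          rw [hcast, ENNReal.div_rpow_of_nonneg _ _ (by norm_num), h2i]
        rw [hv2, ← mul_div_assoc]
        rw [ENNReal.div_le_iff_le_mul (Or.inl (pow_ne_zero i hs_ne_zero))
          (Or.inl (ENNReal.pow_ne_top hs_ne_top))]
        apply le_of_eq
        calc (2:ℝ≥0∞)^i * (A (2^i)) ^ ((1:ℝ)/2)
            = (s*s)^i * (A (2^i)) ^ ((1:ℝ)/2) := by rw [hss]
          _ = s^i * (A (2^i)) ^ ((1:ℝ)/2) * s^i := by rw [mul_pow]; ring
    _ ≤ ∑' i : ℕ, s^i * ∑' l : ℕ, s^(i+l) * g (2^(i+l)) := by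
        refine ENNReal.tsum_le_tsum fun i => ?_
        refine mul_le_mul_right ?_ _
        calc (A (2^i)) ^ ((1:ℝ)/2)
            ≤ (∑' l : ℕ, 2^(i+l) * (g (2^(i+l)))^2) ^ ((1:ℝ)/2) := by
              refine ENNReal.rpow_le_rpow ?_ (by norm_num)
              exact block (fun n => (g n)^2) (fun m n _ hmn => pow_le_pow_left' (hg m n hmn) 2) i
          _ ≤ ∑' l : ℕ, ((2:ℝ≥0∞)^(i+l) * (g (2^(i+l)))^2) ^ ((1:ℝ)/2) := tsum_rpow_half_le _
          _ = ∑' l : ℕ, s^(i+l) * g (2^(i+l)) := by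
              refine tsum_congr fun l => ?_
              rw [ENNReal.mul_rpow_of_nonneg _ _ (by norm_num), h2i]
              congr 1
              rw [← ENNReal.rpow_two, ← ENNReal.rpow_mul]
              norm_num
    _ = ∑' i : ℕ, ∑' l : ℕ, s^l * ((2:ℝ≥0∞)^i * g (2^(i+l))) := by
        refine tsum_congr fun i => ?_
        rw [← ENNReal.tsum_mul_left]
        refine tsum_congr fun l => ?_
        rw [pow_add, ← hss, mul_pow]
        ring
    _ = ∑' l : ℕ, s^l * ∑' i : ℕ, (2:ℝ≥0∞)^i * g (2^(i+l)) := by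
        rw [ENNReal.tsum_comm]
        exact tsum_congr fun l => ENNReal.tsum_mul_left
    _ ≤ ∑' l : ℕ, s^l * (((2:ℝ≥0∞)^l)⁻¹ * E) := by
        refine ENNReal.tsum_le_tsum fun l => mul_le_mul_right (hinner l) _
    _ = (∑' l : ℕ, (s * 2⁻¹)^l) * E := by
        rw [← ENNReal.tsum_mul_right]
        refine tsum_congr fun l => ?_
        rw [mul_pow, ENNReal.inv_pow, ← mul_assoc]
    _ ≤ 4 * E := mul_le_mul_left geom _
    _ ≤ 4 * (3 * ∑' k, g k) := mul_le_mul_right (cond g hg) _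
    _ = 12 * ∑' k, g k := by rw [← mul_assoc]; norm_num


end Stmt13Aux

/-- Here `τsq k` denotes `τ_k²`; the claim is
`∑_{k≥1} √((∑_{n≥k} τ_n⁴)/k) ≤ C ∑_{k≥0} τ_k²`, stated in `ℝ≥0∞` to
incorporate the implicit summability. -/
theorem stmt13 :
    ∃ C : ℝ, 0 < C ∧
      ∀ τsq : ℕ → ℝ, (∀ k, 0 ≤ τsq k) → (∀ k, τsq (k + 1) ≤ τsq k) →
        ∑' k : ℕ, ENNReal.ofReal
            (Real.sqrt ((∑' n : ℕ, τsq (k + 1 + n) ^ 2) / (k + 1)))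
          ≤ ENNReal.ofReal C * ∑' k : ℕ, ENNReal.ofReal (τsq k) := by
  refine ⟨12, by norm_num, fun τsq hpos hmono => ?_⟩
  by_cases hsum : Summable (fun n => (τsq n)^2)
  · set g : ℕ → ℝ≥0∞ := fun n => ENNReal.ofReal (τsq n) with hg
    have hganti : ∀ m n : ℕ, m ≤ n → g n ≤ g m := fun m n hmn =>
      ENNReal.ofReal_le_ofReal (antitone_nat_of_succ_le hmono hmn)
    have hterm : ∀ k : ℕ,
        ENNReal.ofReal (Real.sqrt ((∑' n : ℕ, τsq (k + 1 + n) ^ 2) / (k + 1)))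
          = ((∑' n : ℕ, (g (k+1+n))^2) / ((k:ℝ≥0∞)+1)) ^ ((1:ℝ)/2) := by
      intro k
      have hT : (0:ℝ) ≤ ∑' n : ℕ, τsq (k + 1 + n) ^ 2 :=
        tsum_nonneg fun n => sq_nonneg _
      have hk : (0:ℝ) < (k:ℝ) + 1 := by positivity
      rw [Real.sqrt_eq_rpow]
      rw [← ENNReal.ofReal_rpow_of_nonneg (div_nonneg hT hk.le) (by norm_num : (0:ℝ) ≤ 1/2)]
      congr 1
      rw [ENNReal.ofReal_div_of_pos hk]
      congr 1
      · rw [ENNReal.ofReal_tsum_of_nonneg (fun n => sq_nonneg _)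
          (hsum.comp_injective (add_right_injective (k+1)))]
        exact tsum_congr fun n => ENNReal.ofReal_pow (hpos _) 2
      · rw [show ((k:ℝ)+1) = ((k+1 : ℕ):ℝ) by push_cast; ring, ENNReal.ofReal_natCast]
        push_cast; ring
    calc ∑' k : ℕ, ENNReal.ofReal
            (Real.sqrt ((∑' n : ℕ, τsq (k + 1 + n) ^ 2) / (k + 1)))
        = ∑' k : ℕ, ((∑' n : ℕ, (g (k+1+n))^2) / ((k:ℝ≥0∞)+1)) ^ ((1:ℝ)/2) :=
          tsum_congr hterm
      _ ≤ 12 * ∑' k, g k := Stmt13Aux.core g hganti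
      _ = ENNReal.ofReal 12 * ∑' k : ℕ, ENNReal.ofReal (τsq k) := by
          norm_num [hg]
  · have hz : ∀ k : ℕ, (∑' n : ℕ, τsq (k + 1 + n) ^ 2) = 0 := by
      intro k
      apply tsum_eq_zero_of_not_summable
      intro hcon
      apply hsum
      have hcon2 : Summable (fun n => τsq (n + (k+1)) ^ 2) :=
        hcon.congr fun n => by rw [add_comm]
      exact (summable_nat_add_iff (k+1)).mp hcon2
    have : ∀ k : ℕ,
        ENNReal.ofReal (Real.sqrt ((∑' n : ℕ, τsq (k + 1 + n) ^ 2) / (k + 1))) = 0 := by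
      intro k
      rw [hz k]
      simp
    rw [tsum_congr this]
    simp
end

section
/- Let p be a trigonometric polynomial on the unit circle whose nonzero Fourier coefficients are all supported in [2^n, 2^{n+1}]. There exist an absolute constant c > 0 and m ∈ ℕ such that for all n ≥ m, ‖p‖_{*,n-m} ≥ c‖p‖_∞, where ‖p‖_{*,ℓ} = sup over intervals I ⊂ ℝ/ℤ with 2^{-ℓ} ≤ |I| ≤ 2^{-(ℓ-1)} of (1/|I|)∫_I |p(e(θ)) - (1/|I|)∫_I p| dθ. -/
open Complex Real

/-- The trigonometric polynomial with coefficients `c : ℤ → ℂ` supported in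
`[2^n, 2^{n+1}]`, evaluated at `e(θ) = e^{2πiθ}`. -/
noncomputable def trigPoly (n : ℕ) (c : ℤ → ℂ) (θ : ℝ) : ℂ :=
  ∑ k ∈ Finset.Icc ((2 : ℤ) ^ n) ((2 : ℤ) ^ (n + 1)),
    c k * Complex.exp (2 * π * I * k * θ)

/-- The local mean-oscillation seminorm `‖p‖_{*,ℓ}`: supremum over intervals
`I = [a, a+h]` with `2^{-ℓ} ≤ h ≤ 2^{-(ℓ-1)}` of `(1/h)∫_I |p - (1/h)∫_I p|`. -/
noncomputable def starNormLoc (f : ℝ → ℂ) (ℓ : ℕ) : ℝ :=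
  ⨆ a : ℝ, ⨆ h : ℝ,
    ⨆ _ : h ∈ Set.Icc ((2 : ℝ) ^ (-(ℓ : ℝ))) ((2 : ℝ) ^ (-((ℓ : ℝ) - 1))),
      (1 / h) * ∫ θ in a..(a + h),
        ‖f θ - (1 / h : ℂ) * ∫ s in a..(a + h), f s‖

/-! ### Auxiliary: basic exponentials -/

noncomputable def ce (k : ℤ) (θ : ℝ) : ℂ := Complex.exp (2 * π * I * k * θ)

lemma integral_ce (m : ℤ) : (∫ θ in (0:ℝ)..1, ce m θ) = if m = 0 then 1 else 0 := by
  by_cases hm : m = 0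
  · simp [ce, hm]
  · have hc : (2 * (π:ℂ) * I * m) ≠ 0 := by
      simp [Complex.ext_iff, Real.pi_ne_zero, hm]
    rw [if_neg hm]
    have h1 : (∫ θ in (0:ℝ)..1, ce m θ) = ∫ θ in (0:ℝ)..1, Complex.exp ((2 * π * I * m) * θ) := by
      simp [ce]
    rw [h1, integral_exp_mul_complex hc]
    have h2 : Complex.exp (2*(π:ℂ)*I*m*((1:ℝ):ℂ)) = 1 := by
      rw [show (2*(π:ℂ)*I*m*((1:ℝ):ℂ)) = m*(2*π*I) by push_cast; ring,
        Complex.exp_int_mul_two_pi_mul_I]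
    rw [h2]
    simp

lemma norm_exp_two_pi_sub_one (u : ℝ) :
    ‖Complex.exp (2 * π * I * u) - 1‖ = 2 * |Real.sin (π * u)| := by
  have e1 : Complex.exp (2*π*I*u) = Complex.exp (π*I*u) * Complex.exp (π*I*u) := by
    rw [← Complex.exp_add]; congr 1; ring
  have e2 : Complex.exp (π*I*u) * Complex.exp (-(π*I*u)) = 1 := by
    rw [← Complex.exp_add]; simp
  have e3 : Complex.exp (((π*u:ℝ):ℂ)*I) = Complex.exp (π*I*u) := by congr 1; push_cast; ring
  have e4 : Complex.exp (-((π*u:ℝ):ℂ)*I) = Complex.exp (-(π*I*u)) := by congr 1; push_cast; ring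
  have h : Complex.exp (2*π*I*u) - 1 = Complex.exp (π*I*u) * (2*I*((Real.sin (π*u)) : ℂ)) := by
    rw [Complex.ofReal_sin, Complex.sin, e3, e4]
    linear_combination e1 + e2 + (Complex.exp (π*I*u)^2
      - Complex.exp (π*I*u) * Complex.exp (-(π*I*u))) * Complex.I_sq
  rw [h, norm_mul]
  simp [Complex.norm_exp, Complex.norm_real, -Complex.ofReal_sin]

lemma geom_Icc_bound {z : ℂ} (hz : ‖z‖ = 1) (hz1 : z ≠ 1) (a b : ℤ) :
    ‖∑ k ∈ Finset.Icc a b, z ^ k‖ ≤ 2 / ‖z - 1‖ := by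
  have hz0 : z ≠ 0 := by intro h; rw [h] at hz; simp at hz
  have hd : (0:ℝ) < ‖z - 1‖ := by
    rw [norm_pos_iff]; exact sub_ne_zero.mpr hz1
  rcases lt_or_ge b a with h | h
  · rw [Finset.Icc_eq_empty (not_le.mpr h)]
    simp [le_div_iff₀ hd]
  · set L : ℕ := (b - a).toNat with hL
    have hb : b = a + L := by omega
    have hre : ∑ k ∈ Finset.Icc a b, z ^ k = ∑ i ∈ Finset.range (L+1), z ^ (a + (i:ℤ)) := by
      apply Finset.sum_nbij' (fun k => (k - a).toNat) (fun i => a + (i:ℤ))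
      · intro k hk; simp only [Finset.mem_Icc] at hk; simp [Finset.mem_range]; omega
      · intro i hi; simp only [Finset.mem_range] at hi; simp [Finset.mem_Icc]; omega
      · intro k hk; simp only [Finset.mem_Icc] at hk; omega
      · intro i hi; simp
      · intro k hk; simp only [Finset.mem_Icc] at hk
        congr 1; omega
    rw [hre]
    have : ∀ i : ℕ, z ^ (a + (i:ℤ)) = z ^ a * z ^ i := by
      intro i; rw [zpow_add₀ hz0, zpow_natCast]
    simp_rw [this, ← Finset.mul_sum]
    rw [norm_mul, norm_zpow, hz, one_zpow, one_mul, geom_sum_eq hz1, norm_div]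
    gcongr
    calc ‖z ^ (L+1) - 1‖ ≤ ‖z^(L+1)‖ + 1 := by
          simpa using norm_sub_le (z^(L+1)) 1
      _ ≤ 2 := by rw [norm_pow, hz]; norm_num

lemma sin_lower {u : ℝ} (hu : |u| ≤ 1/2) : 2*|u| ≤ |Real.sin (π*u)| := by
  have h0 : 2/π * (π*|u|) ≤ Real.sin (π*|u|) := by
    apply Real.mul_le_sin (by positivity)
    nlinarith [Real.pi_pos, abs_nonneg u]
  have h1 : 2*|u| ≤ Real.sin (π*|u|) := by
    have he : 2/π*(π*|u|) = 2*|u| := by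
      field_simp
    linarith [he ▸ h0]
  rcases abs_cases u with ⟨h,_⟩ | ⟨h,_⟩
  · rw [h] at h1 ⊢; exact h1.trans (le_abs_self _)
  · rw [h] at h1
    have : Real.sin (π * -u) = - Real.sin (π * u) := by
      rw [← Real.sin_neg]; ring_nf
    rw [this] at h1
    calc 2*|u| = 2*(-u) := by rw [h]
      _ ≤ -Real.sin (π*u) := h1
      _ ≤ |Real.sin (π*u)| := neg_le_abs _

lemma ce_sum_bound {u : ℝ} (hu0 : u ≠ 0) (hu : |u| ≤ 1/2) (a b : ℤ) :
    ‖∑ k ∈ Finset.Icc a b, ce k u‖ ≤ 1/(2*|u|) := by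
  set z : ℂ := Complex.exp (2 * π * I * u) with hzdef
  have habs : (0:ℝ) < |u| := abs_pos.mpr hu0
  have hz : ‖z‖ = 1 := by
    rw [hzdef, Complex.norm_exp]
    simp
  have hnorm : ‖z - 1‖ = 2 * |Real.sin (π * u)| := norm_exp_two_pi_sub_one u
  have hlow : 4*|u| ≤ ‖z - 1‖ := by
    rw [hnorm]; linarith [sin_lower hu]
  have hz1 : z ≠ 1 := by
    intro h; rw [h] at hlow; simp at hlow; linarith
  have hck : ∀ k : ℤ, ce k u = z ^ k := by
    intro k
    rw [ce, hzdef, ← Complex.exp_int_mul]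
    congr 1; ring
  simp_rw [hck]
  calc ‖∑ k ∈ Finset.Icc a b, z ^ k‖ ≤ 2/‖z-1‖ := geom_Icc_bound hz hz1 a b
    _ ≤ 2/(4*|u|) := by apply div_le_div_of_nonneg_left (by norm_num) (by positivity) hlow
    _ = 1/(2*|u|) := by field_simp; ring

lemma continuous_ce (k : ℤ) : Continuous (ce k) := by
  unfold ce; fun_prop

lemma ce_mul (k j : ℤ) (u : ℝ) : ce k u * ce j u = ce (k+j) u := by
  unfold ce; rw [← Complex.exp_add]; congr 1; push_cast; ring

lemma ce_sub (k : ℤ) (θ u : ℝ) : ce k (θ - u) = ce k θ * ce (-k) u := by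
  unfold ce; rw [← Complex.exp_add]; congr 1; push_cast; ring

lemma norm_ce (k : ℤ) (u : ℝ) : ‖ce k u‖ = 1 := by
  rw [ce, Complex.norm_exp]
  norm_num

lemma ce_periodic (k : ℤ) : Function.Periodic (ce k) 1 := by
  intro θ
  unfold ce
  rw [show 2*(π:ℂ)*I*k*((θ+1:ℝ):ℂ) = 2*π*I*k*θ + k*(2*π*I) from by push_cast; ring,
    Complex.exp_add, Complex.exp_int_mul_two_pi_mul_I, mul_one]

/-! ### The trapezoidal-type kernel -/

noncomputable def Tk (N : ℕ) (u : ℝ) : ℂ :=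
  (2*(2:ℂ)^N+1)⁻¹ * (∑ k ∈ Finset.Icc (3*(2:ℤ)^N) (9*(2:ℤ)^N), ce k u)
    * (∑ j ∈ Finset.Icc (-(2:ℤ)^N) ((2:ℤ)^N), ce j u)

lemma continuous_Tk (N : ℕ) : Continuous (Tk N) := by
  unfold Tk
  exact (continuous_const.mul (continuous_finset_sum _ fun k _ => continuous_ce k)).mul
    (continuous_finset_sum _ fun j _ => continuous_ce j)

lemma Tk_periodic (N : ℕ) : Function.Periodic (Tk N) 1 := by
  intro u
  unfold Tk
  rw [Finset.sum_congr rfl (fun k _ => ce_periodic k u),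
    Finset.sum_congr rfl (fun j _ => ce_periodic j u)]

lemma sum_mul_sum_ce (s t : Finset ℤ) (u : ℝ) :
    (∑ k ∈ s, ce k u) * (∑ j ∈ t, ce j u) = ∑ k ∈ s, ∑ j ∈ t, ce (k+j) u := by
  rw [Finset.sum_mul_sum]
  exact Finset.sum_congr rfl fun k _ => Finset.sum_congr rfl fun j _ => ce_mul k j u

lemma integral_ce_Tk (N : ℕ) (K : ℤ) :
    (∫ u in (0:ℝ)..1, ce (-K) u * Tk N u)
      = (2*(2:ℂ)^N+1)⁻¹ * ∑ k ∈ Finset.Icc (3*(2:ℤ)^N) (9*(2:ℤ)^N),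
          ∑ j ∈ Finset.Icc (-(2:ℤ)^N) ((2:ℤ)^N), (if k + j - K = 0 then (1:ℂ) else 0) := by
  have hexp : ∀ u : ℝ, ce (-K) u * Tk N u
      = (2*(2:ℂ)^N+1)⁻¹ * ∑ k ∈ Finset.Icc (3*(2:ℤ)^N) (9*(2:ℤ)^N),
          ∑ j ∈ Finset.Icc (-(2:ℤ)^N) ((2:ℤ)^N), ce (k + j - K) u := by
    intro u
    rw [Tk, mul_assoc, sum_mul_sum_ce, mul_left_comm]
    congr 1
    rw [Finset.mul_sum]
    refine Finset.sum_congr rfl fun k _ => ?_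
    rw [Finset.mul_sum]
    refine Finset.sum_congr rfl fun j _ => ?_
    rw [mul_comm, ce_mul, show k + j + -K = k + j - K from by ring]
  simp_rw [hexp]
  rw [intervalIntegral.integral_const_mul]
  congr 1
  rw [intervalIntegral.integral_finset_sum (fun k _ => Continuous.intervalIntegrable
    (continuous_finset_sum _ fun j _ => continuous_ce _) _ _)]
  refine Finset.sum_congr rfl fun k _ => ?_
  rw [intervalIntegral.integral_finset_sum (fun j _ => (continuous_ce _).intervalIntegrable _ _)]
  exact Finset.sum_congr rfl fun j _ => integral_ce _

lemma two_pow_C_ne (N : ℕ) : (2*(2:ℂ)^N+1) ≠ 0 := by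
  have h : (2*(2:ℂ)^N+1) = ((2*(2:ℝ)^N+1 : ℝ) : ℂ) := by push_cast; ring
  rw [h]
  exact_mod_cast (by positivity : (2*(2:ℝ)^N+1) ≠ 0)

lemma card_Icc_C (N : ℕ) : ((Finset.Icc (-(2:ℤ)^N) ((2:ℤ)^N)).card : ℂ) = 2*(2:ℂ)^N+1 := by
  rw [Int.card_Icc, show ((2:ℤ)^N + 1 - -(2:ℤ)^N) = 2*2^N+1 from by ring]
  have h : ((2:ℤ)*2^N+1) = ((2*2^N+1 : ℕ) : ℤ) := by push_cast; ring
  rw [h, Int.toNat_natCast]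
  push_cast
  ring

lemma integral_ce_Tk_block (N : ℕ) {K : ℤ}
    (hK : K ∈ Finset.Icc (4*(2:ℤ)^N) (8*(2:ℤ)^N)) :
    (∫ u in (0:ℝ)..1, ce (-K) u * Tk N u) = 1 := by
  rw [integral_ce_Tk, Finset.sum_comm]
  rw [Finset.mem_Icc] at hK
  have hin : ∀ j ∈ Finset.Icc (-(2:ℤ)^N) ((2:ℤ)^N),
      (∑ k ∈ Finset.Icc (3*(2:ℤ)^N) (9*(2:ℤ)^N), if k + j - K = 0 then (1:ℂ) else 0) = 1 := by
    intro j hj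
    rw [Finset.mem_Icc] at hj
    have : ∀ k : ℤ, (k + j - K = 0) = (k = K - j) := by
      intro k; simp only [eq_iff_iff]; omega
    simp_rw [this]
    rw [Finset.sum_ite_eq' _ (K - j) (fun _ => (1:ℂ)), if_pos]
    rw [Finset.mem_Icc]; omega
  rw [Finset.sum_congr rfl hin, Finset.sum_const, nsmul_eq_mul, mul_one, card_Icc_C,
    inv_mul_cancel₀ (two_pow_C_ne N)]

lemma integral_Tk_zero (N : ℕ) : (∫ u in (0:ℝ)..1, Tk N u) = 0 := by
  have h : (∫ u in (0:ℝ)..1, Tk N u) = ∫ u in (0:ℝ)..1, ce (-0) u * Tk N u := by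
    congr 1; ext u
    rw [show (-0 : ℤ) = 0 from rfl, ce]
    norm_num
  rw [h, integral_ce_Tk]
  have h1 : (0:ℤ) < 2^N := by positivity
  have hin : ∀ k ∈ Finset.Icc (3*(2:ℤ)^N) (9*(2:ℤ)^N),
      (∑ j ∈ Finset.Icc (-(2:ℤ)^N) ((2:ℤ)^N), if k + j - 0 = 0 then (1:ℂ) else 0) = 0 := by
    intro k hk
    rw [Finset.mem_Icc] at hk
    apply Finset.sum_eq_zero
    intro j hj
    rw [Finset.mem_Icc] at hj
    rw [if_neg (by omega)]
  rw [Finset.sum_congr rfl hin, Finset.sum_const, smul_zero, mul_zero]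

/-! ### Facts about `trigPoly` -/

lemma trigPoly_eq (n : ℕ) (c : ℤ → ℂ) (θ : ℝ) :
    trigPoly n c θ = ∑ k ∈ Finset.Icc ((2:ℤ)^n) ((2:ℤ)^(n+1)), c k * ce k θ := rfl

lemma continuous_trigPoly (n : ℕ) (c : ℤ → ℂ) : Continuous (trigPoly n c) :=
  continuous_finset_sum _ fun k _ => continuous_const.mul (continuous_ce k)

lemma trigPoly_periodic (n : ℕ) (c : ℤ → ℂ) : Function.Periodic (trigPoly n c) 1 := by
  intro θ
  simp_rw [trigPoly_eq]
  exact Finset.sum_congr rfl fun k _ => by rw [ce_periodic k θ]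

lemma block_eq (N : ℕ) :
    Finset.Icc ((2:ℤ)^(N+2)) ((2:ℤ)^(N+3)) = Finset.Icc (4*(2:ℤ)^N) (8*(2:ℤ)^N) := by
  congr 1 <;> ring

lemma repro (N : ℕ) (c : ℤ → ℂ) (θ0 : ℝ) :
    (∫ u in (0:ℝ)..1, trigPoly (N+2) c (θ0 - u) * Tk N u) = trigPoly (N+2) c θ0 := by
  have hexp : ∀ u : ℝ, trigPoly (N+2) c (θ0-u) * Tk N u
      = ∑ K ∈ Finset.Icc ((2:ℤ)^(N+2)) ((2:ℤ)^(N+3)),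
          (c K * ce K θ0) * (ce (-K) u * Tk N u) := by
    intro u
    rw [trigPoly_eq, Finset.sum_mul]
    refine Finset.sum_congr rfl fun K _ => ?_
    rw [ce_sub]; ring
  simp_rw [hexp]
  rw [intervalIntegral.integral_finset_sum (f := fun K u => c K * ce K θ0 * (ce (-K) u * Tk N u))
    (fun K _ =>
    (continuous_const.mul ((continuous_ce _).mul (continuous_Tk N))).intervalIntegrable _ _)]
  rw [trigPoly_eq]
  refine Finset.sum_congr rfl fun K hK => ?_
  rw [intervalIntegral.integral_const_mul, integral_ce_Tk_block N (by rwa [← block_eq]), mul_one]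

/-! ### Size bounds for the kernel -/

lemma inv_norm_C (N : ℕ) : ‖(2*(2:ℂ)^N+1)⁻¹‖ = (2*(2:ℝ)^N+1)⁻¹ := by
  rw [norm_inv]
  congr 1
  rw [show (2*(2:ℂ)^N+1) = ((2*(2:ℝ)^N+1 : ℝ) : ℂ) from by push_cast; ring,
    Complex.norm_real, Real.norm_eq_abs, abs_of_pos (by positivity)]

lemma norm_sum_ce_le_card (s : Finset ℤ) (u : ℝ) : ‖∑ k ∈ s, ce k u‖ ≤ s.card := by
  calc ‖∑ k ∈ s, ce k u‖ ≤ ∑ k ∈ s, ‖ce k u‖ := norm_sum_le _ _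
    _ = s.card := by
        rw [Finset.sum_congr rfl (fun k _ => norm_ce k u), Finset.sum_const, nsmul_eq_mul, mul_one]

lemma Tk_norm_le (N : ℕ) (u : ℝ) : ‖Tk N u‖ ≤ 2^(N+3) := by
  have hc1 : ((Finset.Icc (3*(2:ℤ)^N) (9*(2:ℤ)^N)).card : ℝ) = 6*2^N+1 := by
    rw [Int.card_Icc, show (9*(2:ℤ)^N + 1 - 3*2^N) = ((6*2^N+1 : ℕ) : ℤ) from by push_cast; ring,
      Int.toNat_natCast]
    push_cast; ring
  have hc2 : ((Finset.Icc (-(2:ℤ)^N) ((2:ℤ)^N)).card : ℝ) = 2*2^N+1 := by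
    rw [Int.card_Icc, show ((2:ℤ)^N + 1 - -(2:ℤ)^N) = ((2*2^N+1 : ℕ) : ℤ) from by push_cast; ring,
      Int.toNat_natCast]
    push_cast; ring
  have h1 : (0:ℝ) < 2*(2:ℝ)^N+1 := by positivity
  calc ‖Tk N u‖ ≤ (2*(2:ℝ)^N+1)⁻¹ * (6*2^N+1) * (2*2^N+1) := by
        rw [Tk, norm_mul, norm_mul, inv_norm_C]
        gcongr
        · exact (norm_sum_ce_le_card _ u).trans (le_of_eq hc1)
        · exact (norm_sum_ce_le_card _ u).trans (le_of_eq hc2)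
    _ = 6*2^N+1 := by field_simp
    _ ≤ 2^(N+3) := by
        have ht1 : (1:ℝ) ≤ 2^N := one_le_pow₀ (by norm_num)
        rw [pow_add]; nlinarith

lemma Tk_norm_decay (N : ℕ) {u : ℝ} (hu0 : u ≠ 0) (hu : |u| ≤ 1/2) :
    ‖Tk N u‖ ≤ 1/(2^(N+3) * u^2) := by
  have h2 : (0:ℝ) < (2:ℝ)^N := by positivity
  have hu2 : (0:ℝ) < u^2 := by positivity
  calc ‖Tk N u‖ ≤ (2*(2:ℝ)^N+1)⁻¹ * (1/(2*|u|)) * (1/(2*|u|)) := by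
        rw [Tk, norm_mul, norm_mul, inv_norm_C]
        gcongr
        · exact ce_sum_bound hu0 hu _ _
        · exact ce_sum_bound hu0 hu _ _
    _ = 1/((2*(2:ℝ)^N+1) * (4*u^2)) := by
        have hs : 2 * |u| * (2 * |u|) = 4 * u ^ 2 := by
          linear_combination 4 * abs_mul_abs_self u
        rw [mul_assoc, div_mul_div_comm, one_mul, hs, inv_eq_one_div, div_mul_div_comm, one_mul]
    _ ≤ 1/(2^(N+3) * u^2) := by
        have ht1 : (1:ℝ) ≤ 2^N := one_le_pow₀ (by norm_num)
        apply one_div_le_one_div_of_le (by positivity)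
        rw [pow_add]
        nlinarith

/-! ### Supremum and the star norm -/

lemma exists_global_max {f : ℝ → ℂ} (hf : Continuous f) (hper : Function.Periodic f 1) :
    ∃ θ0 : ℝ, (∀ θ : ℝ, ‖f θ‖ ≤ ‖f θ0‖) ∧ (⨆ θ : ℝ, ‖f θ‖) = ‖f θ0‖ := by
  obtain ⟨θ0, _, hmax⟩ := (isCompact_Icc (a := (0:ℝ)) (b := 1)).exists_isMaxOn
    (Set.nonempty_Icc.mpr zero_le_one) (hf.norm.continuousOn)
  have hall : ∀ θ : ℝ, ‖f θ‖ ≤ ‖f θ0‖ := by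
    intro θ
    have hfr : f (Int.fract θ) = f θ := by
      have h1 := hper.sub_int_mul_eq (x := θ) ⌊θ⌋
      rw [mul_one] at h1
      rw [Int.fract, h1]
    calc ‖f θ‖ = ‖f (Int.fract θ)‖ := by rw [hfr]
      _ ≤ ‖f θ0‖ := hmax (Set.mem_Icc.mpr ⟨Int.fract_nonneg θ, (Int.fract_lt_one θ).le⟩)
  refine ⟨θ0, hall, ?_⟩
  apply le_antisymm
  · exact ciSup_le fun θ => by rw [show ‖f θ‖ = ‖f θ‖ from rfl]; exact hall θ
  · rw [show ‖f θ0‖ = ‖f θ0‖ from rfl]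
    exact le_ciSup ⟨‖f θ0‖,
      by rintro x ⟨θ, rfl⟩; exact hall θ⟩ θ0

lemma norm_one_div_complex (h : ℝ) (hh : 0 < h) : ‖(1 / (h:ℂ))‖ = 1 / h := by
  rw [norm_div, norm_one, Complex.norm_real, Real.norm_eq_abs, abs_of_pos hh]

lemma avg_norm_le {f : ℝ → ℂ} {M : ℝ} (hM : ∀ θ, ‖f θ‖ ≤ M) {a h : ℝ} (hh : 0 < h) :
    ‖(1 / (h:ℂ)) * ∫ s in a..(a + h), f s‖ ≤ M := by
  rw [norm_mul, norm_one_div_complex h hh]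
  have h1 : ‖∫ s in a..(a + h), f s‖ ≤ M * |a + h - a| :=
    intervalIntegral.norm_integral_le_of_norm_le_const fun x _ => hM x
  rw [show a + h - a = h from by ring, abs_of_pos hh] at h1
  calc 1/h * ‖∫ s in a..(a + h), f s‖ ≤ 1/h * (M * h) := by
        apply mul_le_mul_of_nonneg_left h1 (by positivity)
    _ = M := by field_simp

lemma le_starNormLoc {f : ℝ → ℂ} {M : ℝ} (hM : ∀ θ, ‖f θ‖ ≤ M)
    (hcont : Continuous f) (ℓ : ℕ) {a h : ℝ}
    (hmem : h ∈ Set.Icc ((2 : ℝ) ^ (-(ℓ : ℝ))) ((2 : ℝ) ^ (-((ℓ : ℝ) - 1)))) :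
    (1 / h) * (∫ θ in a..(a + h),
        ‖f θ - (1 / h : ℂ) * ∫ s in a..(a + h), f s‖)
      ≤ starNormLoc f ℓ := by
  have hM0 : 0 ≤ M := (norm_nonneg _).trans (hM 0)
  have hlo : (0:ℝ) < (2 : ℝ) ^ (-(ℓ : ℝ)) := Real.rpow_pos_of_pos (by norm_num) _
  set lo := (2 : ℝ) ^ (-(ℓ : ℝ))
  set hi := (2 : ℝ) ^ (-((ℓ : ℝ) - 1))
  set val : ℝ → ℝ → ℝ := fun a' h' => (1 / h') * ∫ θ in a'..(a' + h'),
        ‖f θ - (1 / h' : ℂ) * ∫ s in a'..(a' + h'), f s‖ with hvaldef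
  have hval : ∀ (a' h' : ℝ), h' ∈ Set.Icc lo hi → val a' h' ≤ 2 * M := by
    intro a' h' hm
    have hh : 0 < h' := lt_of_lt_of_le hlo hm.1
    have hbd : ∀ θ, ‖f θ - (1 / (h':ℂ)) * ∫ s in a'..(a' + h'), f s‖ ≤ 2*M := by
      intro θ
      calc ‖f θ - (1 / (h':ℂ)) * ∫ s in a'..(a' + h'), f s‖
          ≤ ‖f θ‖ + ‖(1 / (h':ℂ)) * ∫ s in a'..(a' + h'), f s‖ := norm_sub_le _ _
        _ ≤ M + M := add_le_add (hM θ) (avg_norm_le hM hh)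
        _ = 2*M := by ring
    have h2 : (∫ θ in a'..(a' + h'), ‖f θ - (1 / h' : ℂ) * ∫ s in a'..(a' + h'), f s‖)
        ≤ 2*M * h' := by
      calc (∫ θ in a'..(a' + h'), ‖f θ - (1 / h' : ℂ) * ∫ s in a'..(a' + h'), f s‖)
          ≤ ∫ _ in a'..(a' + h'), 2*M := by
            apply intervalIntegral.integral_mono_on (by linarith)
            · apply Continuous.intervalIntegrable
              exact (continuous_norm.comp (hcont.sub continuous_const))
            · exact intervalIntegrable_const
            · intro θ hθ; exact hbd θ
        _ = 2*M*h' := by rw [intervalIntegral.integral_const, smul_eq_mul]; ring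
    rw [hvaldef]
    calc (1 / h') * ∫ θ in a'..(a' + h'),
          ‖f θ - (1 / h' : ℂ) * ∫ s in a'..(a' + h'), f s‖
        ≤ (1 / h') * (2*M*h') := by
          apply mul_le_mul_of_nonneg_left h2 (by positivity)
      _ = 2*M := by field_simp
  have hub : ∀ a' h' : ℝ, (⨆ _ : h' ∈ Set.Icc lo hi, val a' h') ≤ 2*M := by
    intro a' h'
    by_cases hm : h' ∈ Set.Icc lo hi
    · rw [ciSup_pos hm]; exact hval a' h' hm
    · haveI : IsEmpty (h' ∈ Set.Icc lo hi) := ⟨hm⟩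
      rw [Real.iSup_of_isEmpty]; positivity
  calc val a h = ⨆ _ : h ∈ Set.Icc lo hi, val a h :=
        (ciSup_pos (f := fun _ => val a h) hmem).symm
    _ ≤ ⨆ h' : ℝ, ⨆ _ : h' ∈ Set.Icc lo hi, val a h' := by
        apply le_ciSup (f := fun h' => ⨆ _ : h' ∈ Set.Icc lo hi, val a h')
        exact ⟨2*M, by rintro x ⟨h', rfl⟩; exact hub a h'⟩
    _ ≤ starNormLoc f ℓ := by
        apply le_ciSup (f := fun a' => ⨆ h' : ℝ, ⨆ _ : h' ∈ Set.Icc lo hi, val a' h')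
        refine ⟨2*M, by rintro x ⟨a', rfl⟩; exact ciSup_le fun h' => hub a' h'⟩

open MeasureTheory in
lemma far_piece {F : ℝ → ℂ} {C α β : ℝ} (hC : 0 ≤ C) (hab : α ≤ β)
    (h0 : ∀ u ∈ Set.uIcc α β, u ≠ 0) (hinv : β⁻¹ ≤ α⁻¹)
    (hF : ∀ u ∈ Set.uIoc α β, ‖F u‖ ≤ C * (u^2)⁻¹)
    (hFi : IntervalIntegrable F volume α β) :
    ‖∫ u in α..β, F u‖ ≤ C * (α⁻¹ - β⁻¹) := by
  have hcont : ContinuousOn (fun u : ℝ => (u^2)⁻¹) (Set.uIcc α β) := by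
    apply ContinuousOn.inv₀ (by fun_prop)
    intro u hu
    exact pow_ne_zero _ (h0 u hu)
  have hginteg : IntervalIntegrable (fun u => C * (u^2)⁻¹) volume α β :=
    (continuousOn_const.mul hcont).intervalIntegrable
  have hint : (∫ u in α..β, C * (u^2)⁻¹) = C * (α⁻¹ - β⁻¹) := by
    rw [intervalIntegral.integral_const_mul]
    have h2 : (∫ u in α..β, (u^2)⁻¹) = (-β⁻¹) - (-α⁻¹) := by
      apply intervalIntegral.integral_eq_sub_of_hasDerivAt
      · intro u hu
        have := (hasDerivAt_inv (h0 u hu)).neg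
        simp only [neg_neg] at this
        exact this
      · exact hcont.intervalIntegrable
    rw [h2]; ring
  calc ‖∫ u in α..β, F u‖ ≤ |∫ u in α..β, C * (u^2)⁻¹| :=
        intervalIntegral.norm_integral_le_abs_of_norm_le
          ((ae_restrict_iff' measurableSet_uIoc).mpr (.of_forall fun u hu => hF u hu)) hginteg
    _ = C * (α⁻¹ - β⁻¹) := by
        rw [hint]
        exact abs_of_nonneg (mul_nonneg hC (by linarith))

/-! ### The key estimate -/

lemma key (L : ℕ) (c : ℤ → ℂ) :
    (⨆ θ : ℝ, ‖trigPoly (L+3) c θ‖)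
      ≤ 32 * starNormLoc (trigPoly (L+3) c) L := by
  obtain ⟨θ0, hall, hsup⟩ :=
    exists_global_max (continuous_trigPoly (L+3) c) (trigPoly_periodic (L+3) c)
  set p : ℝ → ℂ := trigPoly (L+3) c with hp
  set M : ℝ := ‖p θ0‖ with hMdef
  have hM0 : 0 ≤ M := norm_nonneg _
  have h2L : (0:ℝ) < (2:ℝ)^L := by positivity
  have h2L1 : (1:ℝ) ≤ (2:ℝ)^L := one_le_pow₀ (by norm_num)
  set h : ℝ := ((2:ℝ)^L)⁻¹ with hhdef
  have hh : 0 < h := by positivity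
  have hh1 : h ≤ 1 := by
    rw [hhdef]
    exact inv_le_one_of_one_le₀ h2L1
  have hhe : h * (2:ℝ)^L = 1 := by
    rw [hhdef]; field_simp
  have hmem : h ∈ Set.Icc ((2:ℝ)^(-(L:ℝ))) ((2:ℝ)^(-((L:ℝ)-1))) := by
    have he : (2:ℝ)^(-(L:ℝ)) = h := by
      rw [Real.rpow_neg (by norm_num), Real.rpow_natCast]
    constructor
    · rw [he]
    · rw [show -((L:ℝ)-1) = -(L:ℝ) + 1 from by ring, Real.rpow_add (by norm_num), he,
        Real.rpow_one]
      nlinarith [hh.le]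
  set a0 : ℝ := θ0 - h/2 with ha0
  set A : ℂ := (1 / h : ℂ) * ∫ s in a0..(a0 + h), p s with hA
  have hAM : ‖A‖ ≤ M := avg_norm_le hall hh
  have hbd2M : ∀ t : ℝ, ‖p t - A‖ ≤ 2*M := fun t => by
    calc ‖p t - A‖ ≤ ‖p t‖ + ‖A‖ := norm_sub_le _ _
      _ ≤ M + M := add_le_add (hall t) hAM
      _ = 2*M := by ring
  set X : ℝ := (1 / h) * ∫ θ in a0..(a0 + h), ‖p θ - A‖ with hX
  have hXO : X ≤ starNormLoc p L :=
    le_starNormLoc hall (continuous_trigPoly (L+3) c) L hmem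
  -- the convolution function
  set G : ℝ → ℂ := fun u => (p (θ0 - u) - A) * Tk (L+1) u with hG
  have hpcont : Continuous p := continuous_trigPoly (L+3) c
  have hGcont : Continuous G := by
    apply Continuous.mul
    · exact (hpcont.comp (continuous_const.sub continuous_id)).sub continuous_const
    · exact continuous_Tk (L+1)
  have hpper : Function.Periodic p 1 := trigPoly_periodic (L+3) c
  have hGper : Function.Periodic G 1 := by
    intro u
    have h1 : θ0 - (u + 1) = (θ0 - u) - 1 := by ring
    simp only [hG]
    rw [h1, hpper.sub_eq, Tk_periodic (L+1) u]
  have hrepro : (∫ u in (0:ℝ)..1, G u) = p θ0 := by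
    have h1 : ∀ u : ℝ, G u = p (θ0 - u) * Tk (L+1) u - A * Tk (L+1) u := by
      intro u; simp only [hG]; ring
    simp_rw [h1]
    have hi1 : IntervalIntegrable (fun u : ℝ => p (θ0 - u) * Tk (L+1) u)
        MeasureTheory.volume 0 1 :=
      ((hpcont.comp (continuous_const.sub continuous_id)).mul
        (continuous_Tk (L+1))).intervalIntegrable _ _
    have hi2 : IntervalIntegrable (fun u : ℝ => A * Tk (L+1) u)
        MeasureTheory.volume 0 1 :=
      (continuous_const.mul (continuous_Tk (L+1))).intervalIntegrable _ _
    rw [intervalIntegral.integral_sub hi1 hi2]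
    rw [show (∫ u in (0:ℝ)..1, p (θ0 - u) * Tk (L+1) u) = p θ0 from repro (L+1) c θ0,
      intervalIntegral.integral_const_mul, integral_Tk_zero, mul_zero, sub_zero]
  have hshift : (∫ u in (0:ℝ)..1, G u) = ∫ u in (-(1:ℝ)/2)..(1/2), G u := by
    have hs := hGper.intervalIntegral_add_eq 0 (-(1:ℝ)/2)
    rw [zero_add] at hs
    rw [hs, show (-(1:ℝ)/2 + 1) = 1/2 from by norm_num]
  have hsplit : (∫ u in (-(1:ℝ)/2)..(1/2), G u)
      = (∫ u in (-(1:ℝ)/2)..(-(h/2)), G u) + (∫ u in (-(h/2))..(h/2), G u)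
        + (∫ u in (h/2)..(1/2), G u) := by
    have i1 := intervalIntegral.integral_add_adjacent_intervals
      (μ := MeasureTheory.volume) (a := -(1:ℝ)/2) (b := -(h/2)) (c := h/2)
      (hGcont.intervalIntegrable _ _) (hGcont.intervalIntegrable _ _)
    have i2 := intervalIntegral.integral_add_adjacent_intervals
      (μ := MeasureTheory.volume) (a := -(1:ℝ)/2) (b := h/2) (c := 1/2)
      (hGcont.intervalIntegrable _ _) (hGcont.intervalIntegrable _ _)
    rw [← i2, ← i1]
  -- middle piece
  have habs_eq : (∫ θ in a0..(a0 + h), ‖p θ - A‖)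
      = ∫ θ in a0..(a0 + h), ‖p θ - A‖ := rfl
  have hmid : ‖∫ u in (-(h/2))..(h/2), G u‖ ≤ 16 * X := by
    have hb : -(h/2) ≤ h/2 := by linarith
    calc ‖∫ u in (-(h/2))..(h/2), G u‖
        ≤ ∫ u in (-(h/2))..(h/2), ‖G u‖ :=
          intervalIntegral.norm_integral_le_integral_norm hb
      _ ≤ ∫ u in (-(h/2))..(h/2), (2:ℝ)^(L+4) * ‖p (θ0 - u) - A‖ := by
          apply intervalIntegral.integral_mono_on hb
            (hGcont.norm.intervalIntegrable _ _)
            ((continuous_const.mul ((hpcont.comp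
              (continuous_const.sub continuous_id)).sub continuous_const).norm).intervalIntegrable _ _)
          intro u hu
          rw [hG]
          simp only
          rw [norm_mul, mul_comm]
          apply mul_le_mul_of_nonneg_right _ (norm_nonneg _)
          exact Tk_norm_le (L+1) u
      _ = (2:ℝ)^(L+4) * ∫ u in (-(h/2))..(h/2), ‖p (θ0 - u) - A‖ :=
          intervalIntegral.integral_const_mul _ _
      _ = (2:ℝ)^(L+4) * ∫ t in (θ0 - h/2)..(θ0 - -(h/2)), ‖p t - A‖ := by
          rw [intervalIntegral.integral_comp_sub_left (fun t => ‖p t - A‖) θ0]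
      _ = (2:ℝ)^(L+4) * ∫ t in a0..(a0 + h), ‖p t - A‖ := by
          rw [show θ0 - h/2 = a0 from by rw [ha0], show θ0 - -(h/2) = a0 + h from by
            rw [ha0]; ring]
      _ = (2:ℝ)^(L+4) * (h * X) := by
          rw [hX, habs_eq]
          field_simp
      _ = 16 * X := by
          rw [hhdef, pow_add]
          field_simp
          ring
  -- far pieces
  have hfar_bound : ∀ u : ℝ, u ≠ 0 → |u| ≤ 1/2 →
      ‖G u‖ ≤ (2*M*((2:ℝ)^(L+4))⁻¹) * (u^2)⁻¹ := by
    intro u hu0 hub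
    have hTk : ‖Tk (L+1) u‖ ≤ 1/(2^(L+4) * u^2) := Tk_norm_decay (L+1) hu0 hub
    have hu2 : (0:ℝ) < u^2 := by positivity
    have h24 : (0:ℝ) < (2:ℝ)^(L+4) := by positivity
    calc ‖G u‖ = ‖p (θ0 - u) - A‖ * ‖Tk (L+1) u‖ := by rw [hG]; simp only; rw [norm_mul]
      _ ≤ (2*M) * (1/(2^(L+4) * u^2)) := by
          apply mul_le_mul (hbd2M _) hTk (norm_nonneg _) (by linarith)
      _ = (2*M*((2:ℝ)^(L+4))⁻¹) * (u^2)⁻¹ := by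
          field_simp
  have hC0 : (0:ℝ) ≤ 2*M*((2:ℝ)^(L+4))⁻¹ := by positivity
  have hhalf : (h/2)⁻¹ = 2*(2:ℝ)^L := by
    rw [hhdef, inv_div, div_eq_mul_inv, inv_inv]
  have hfar_val : (2*M*((2:ℝ)^(L+4))⁻¹) * ((h/2)⁻¹ - (1/2:ℝ)⁻¹) ≤ M/4 := by
    have h24 : ((2:ℝ)^(L+4)) = 2^L * 16 := by rw [pow_add]; norm_num
    rw [h24, hhalf, show ((1:ℝ)/2)⁻¹ = 2 from by norm_num]
    have expand : 2*M*(((2:ℝ)^L*16))⁻¹ * (2*(2:ℝ)^L - 2)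
        = M/4 - M * ((2:ℝ)^L)⁻¹ * 4⁻¹ := by
      field_simp
      ring
    rw [expand]
    have : 0 ≤ M * ((2:ℝ)^L)⁻¹ * 4⁻¹ := by positivity
    linarith
  have hfarR : ‖∫ u in (h/2)..(1/2), G u‖ ≤ M/4 := by
    have hab : h/2 ≤ 1/2 := by linarith
    have h0 : ∀ u ∈ Set.uIcc (h/2) (1/2:ℝ), u ≠ 0 := by
      intro u hu
      rw [Set.uIcc_of_le hab] at hu
      have := hu.1
      intro hz; rw [hz] at this; linarith
    have hFb : ∀ u ∈ Set.uIoc (h/2) (1/2:ℝ), ‖G u‖ ≤ (2*M*((2:ℝ)^(L+4))⁻¹) * (u^2)⁻¹ := by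
      intro u hu
      rw [Set.uIoc_of_le hab] at hu
      apply hfar_bound u (by intro hz; rw [hz] at hu; exact absurd hu.1 (by linarith))
      rw [abs_of_pos (lt_of_le_of_lt (by linarith : (0:ℝ) ≤ h/2) hu.1)]
      exact hu.2
    have hinv : ((1:ℝ)/2)⁻¹ ≤ (h/2)⁻¹ := by
      rw [hhalf, show ((1:ℝ)/2)⁻¹ = 2 from by norm_num]
      linarith [h2L1]
    calc ‖∫ u in (h/2)..(1/2), G u‖
        ≤ (2*M*((2:ℝ)^(L+4))⁻¹) * ((h/2)⁻¹ - (1/2:ℝ)⁻¹) :=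
          far_piece hC0 hab h0 hinv hFb (hGcont.intervalIntegrable _ _)
      _ ≤ M/4 := hfar_val
  have hfarL : ‖∫ u in (-(1:ℝ)/2)..(-(h/2)), G u‖ ≤ M/4 := by
    have hab : -(1:ℝ)/2 ≤ -(h/2) := by linarith
    have h0 : ∀ u ∈ Set.uIcc (-(1:ℝ)/2) (-(h/2)), u ≠ 0 := by
      intro u hu
      rw [Set.uIcc_of_le hab] at hu
      have := hu.2
      intro hz; rw [hz] at this; linarith
    have hFb : ∀ u ∈ Set.uIoc (-(1:ℝ)/2) (-(h/2)), ‖G u‖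
        ≤ (2*M*((2:ℝ)^(L+4))⁻¹) * (u^2)⁻¹ := by
      intro u hu
      rw [Set.uIoc_of_le hab] at hu
      have hun : u < 0 := lt_of_le_of_lt hu.2 (by linarith)
      apply hfar_bound u (ne_of_lt hun)
      rw [abs_of_neg hun]
      linarith [hu.1]
    have hinv : (-(h/2))⁻¹ ≤ (-(1:ℝ)/2)⁻¹ := by
      rw [inv_neg, hhalf, show ((-(1:ℝ)/2))⁻¹ = -2 from by norm_num]
      linarith [h2L1]
    have hval2 : (2*M*((2:ℝ)^(L+4))⁻¹) * ((-(1:ℝ)/2)⁻¹ - (-(h/2))⁻¹) ≤ M/4 := by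
      have heq : ((-(1:ℝ)/2)⁻¹ - (-(h/2))⁻¹) = ((h/2)⁻¹ - (1/2:ℝ)⁻¹) := by
        rw [inv_neg, show ((-(1:ℝ)/2))⁻¹ = -2 from by norm_num,
          show ((1:ℝ)/2)⁻¹ = 2 from by norm_num]
        ring
      rw [heq]
      exact hfar_val
    calc ‖∫ u in (-(1:ℝ)/2)..(-(h/2)), G u‖
        ≤ (2*M*((2:ℝ)^(L+4))⁻¹) * ((-(1:ℝ)/2)⁻¹ - (-(h/2))⁻¹) :=
          far_piece hC0 hab h0 hinv hFb (hGcont.intervalIntegrable _ _)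
      _ ≤ M/4 := hval2
  -- put it together
  have hMle : M ≤ 16*X + M/2 := by
    have hM1 : M = ‖(∫ u in (-(1:ℝ)/2)..(-(h/2)), G u) + (∫ u in (-(h/2))..(h/2), G u)
        + (∫ u in (h/2)..(1/2), G u)‖ := by
      rw [← hsplit, ← hshift, hrepro]
    calc M = ‖(∫ u in (-(1:ℝ)/2)..(-(h/2)), G u) + (∫ u in (-(h/2))..(h/2), G u)
          + (∫ u in (h/2)..(1/2), G u)‖ := hM1
      _ ≤ ‖(∫ u in (-(1:ℝ)/2)..(-(h/2)), G u) + (∫ u in (-(h/2))..(h/2), G u)‖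
          + ‖∫ u in (h/2)..(1/2), G u‖ := norm_add_le _ _
      _ ≤ ‖∫ u in (-(1:ℝ)/2)..(-(h/2)), G u‖ + ‖∫ u in (-(h/2))..(h/2), G u‖
          + ‖∫ u in (h/2)..(1/2), G u‖ := by
            have := norm_add_le (∫ u in (-(1:ℝ)/2)..(-(h/2)), G u)
              (∫ u in (-(h/2))..(h/2), G u)
            linarith
      _ ≤ M/4 + 16*X + M/4 := by
            have := hfarL; have := hmid; have := hfarR
            linarith
      _ = 16*X + M/2 := by ring
  rw [hsup]
  have : M ≤ 32 * X := by linarith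
  calc ‖p θ0‖ = M := rfl
    _ ≤ 32 * X := this
    _ ≤ 32 * starNormLoc p L := by linarith

theorem stmt14 :
    ∃ c : ℝ, 0 < c ∧ ∃ m : ℕ,
      ∀ n : ℕ, m ≤ n → ∀ p : ℤ → ℂ,
        c * (⨆ θ : ℝ, ‖trigPoly n p θ‖) ≤
          starNormLoc (trigPoly n p) (n - m) := by
  refine ⟨1/32, by norm_num, 3, ?_⟩
  intro n hn p
  obtain ⟨L, rfl⟩ : ∃ L, n = L + 3 := ⟨n - 3, by omega⟩
  rw [show (L + 3) - 3 = L from by omega]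
  have := key L p
  linarith
end

section
/- Let A be a finite subset of positive integers, and let f(z) = (1/r) ∑_{(i,j) ∈ S} ζ_{i,j} z^{m_{i,j}} be a Gaussian polynomial where S has r² elements indexed by i,j ∈ {1,…,r}, ζ_{i,j} are i.i.d. standard complex Gaussians, and for each i the exponents satisfy n·2^i ≤ m_{i,j} ≤ n·2^i + n·4^{-r}. Then sup_{|z|<1} (1-|z|)|f'(z)| ≤ 2 max_{1≤i≤r} Θ_i, where Θ_i = (1/r) ∑_{j=1}^r |ζ_{i,j}|. -/
open Complex Finset

lemma geom_aux (t : ℝ) (h0 : 0 ≤ t) (h1 : t ≤ 1) (K : ℕ) :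
    (1 - t) * ((K : ℝ) * t ^ (K - 1)) ≤ 1 - t ^ K := by
  have h : (K : ℝ) * t ^ (K - 1) ≤ ∑ j ∈ Finset.range K, t ^ j := by
    calc (K : ℝ) * t ^ (K - 1) = ∑ _j ∈ Finset.range K, t ^ (K - 1) := by
          simp [mul_comm]
      _ ≤ ∑ j ∈ Finset.range K, t ^ j :=
          Finset.sum_le_sum fun j hj =>
            pow_le_pow_of_le_one h0 h1 (by have := Finset.mem_range.mp hj; omega)
  have h2 : (1 - t) * ∑ j ∈ Finset.range K, t ^ j = 1 - t ^ K := by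
    have := geom_sum_mul t K
    linarith [this]
  nlinarith [mul_le_mul_of_nonneg_left h (by linarith : (0:ℝ) ≤ 1 - t)]

lemma claimA (n : ℕ) (hn : 1 ≤ n) (t : ℝ) (h0 : 0 ≤ t) (h1 : t ≤ 1) :
    ∀ s : ℕ, ∑ i ∈ Finset.range s, (1 - t) * ((n : ℝ) * 2 ^ (i + 1) * t ^ (n * 2 ^ (i + 1) - 1))
      ≤ 2 * (t ^ n - t ^ (n * 2 ^ s)) := by
  intro s
  induction s with
  | zero => simp
  | succ s ih =>
    rw [Finset.sum_range_succ]
    have hK : 1 ≤ n * 2 ^ s := Nat.one_le_iff_ne_zero.mpr (by positivity)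
    set K := n * 2 ^ s with hKdef
    have hterm : (1 - t) * ((n : ℝ) * 2 ^ (s + 1) * t ^ (n * 2 ^ (s + 1) - 1))
        ≤ 2 * (t ^ K - t ^ (n * 2 ^ (s + 1))) := by
      have hga := geom_aux t h0 h1 K
      have hmul := mul_le_mul_of_nonneg_left hga (by positivity : (0:ℝ) ≤ 2 * t ^ K)
      have e1 : n * 2 ^ (s + 1) = K + K := by rw [hKdef]; ring
      have e2 : n * 2 ^ (s + 1) - 1 = K + (K - 1) := by omega
      have e3 : ((n : ℝ) * 2 ^ (s + 1)) = 2 * (K : ℝ) := by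
        rw [hKdef]; push_cast; ring
      rw [e2, e3, e1, pow_add, pow_add]
      calc (1 - t) * (2 * (K:ℝ) * (t ^ K * t ^ (K - 1)))
          = 2 * t ^ K * ((1 - t) * ((K:ℝ) * t ^ (K - 1))) := by ring
        _ ≤ 2 * t ^ K * (1 - t ^ K) := hmul
        _ = 2 * (t ^ K - t ^ K * t ^ K) := by ring
    calc _ ≤ 2 * (t ^ n - t ^ K) + 2 * (t ^ K - t ^ (n * 2 ^ (s + 1))) :=
          add_le_add ih hterm
      _ = 2 * (t ^ n - t ^ (n * 2 ^ (s + 1))) := by ring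

lemma key_sum (n r : ℕ) (hn : 1 ≤ n) (hr : 1 ≤ r) (t : ℝ) (h0 : 0 ≤ t) (h1 : t < 1) :
    (1 - t) * ∑ i ∈ Finset.Icc 1 r,
      ((n : ℝ) * 2 ^ i + (n : ℝ) * (4 : ℝ) ^ (-(r : ℝ))) * t ^ (n * 2 ^ i - 1) ≤ 2 := by
  have ht1 : t ≤ 1 := le_of_lt h1
  have hsplit : (1 - t) * ∑ i ∈ Finset.Icc 1 r,
      ((n : ℝ) * 2 ^ i + (n : ℝ) * (4 : ℝ) ^ (-(r : ℝ))) * t ^ (n * 2 ^ i - 1)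
      = (∑ i ∈ Finset.Icc 1 r, (1 - t) * ((n : ℝ) * 2 ^ i * t ^ (n * 2 ^ i - 1)))
        + (∑ i ∈ Finset.Icc 1 r, (1 - t) * ((n : ℝ) * (4 : ℝ) ^ (-(r : ℝ)) * t ^ (n * 2 ^ i - 1))) := by
    rw [Finset.mul_sum, ← Finset.sum_add_distrib]
    exact Finset.sum_congr rfl fun i _ => by ring
  rw [hsplit]
  have hA : (∑ i ∈ Finset.Icc 1 r, (1 - t) * ((n : ℝ) * 2 ^ i * t ^ (n * 2 ^ i - 1)))
      ≤ 2 * (t ^ n - t ^ (n * 2 ^ r)) := by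
    rw [← Finset.Ico_add_one_right_eq_Icc, Finset.sum_Ico_eq_sum_range]
    have := claimA n hn t h0 ht1 r
    calc ∑ i ∈ Finset.range r, (1 - t) * ((n : ℝ) * 2 ^ (1 + i) * t ^ (n * 2 ^ (1 + i) - 1))
        = ∑ i ∈ Finset.range r, (1 - t) * ((n : ℝ) * 2 ^ (i + 1) * t ^ (n * 2 ^ (i + 1) - 1)) := by
          exact Finset.sum_congr rfl fun i _ => by rw [Nat.add_comm 1 i]
      _ ≤ _ := this
  have h4r : (4 : ℝ) ^ (-(r : ℝ)) = ((4 : ℝ) ^ r)⁻¹ := by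
    rw [Real.rpow_neg (by norm_num), Real.rpow_natCast]
  have hB : (∑ i ∈ Finset.Icc 1 r, (1 - t) * ((n : ℝ) * (4 : ℝ) ^ (-(r : ℝ)) * t ^ (n * 2 ^ i - 1)))
      ≤ 2 * (1 - t ^ n) := by
    have hterm : ∀ i ∈ Finset.Icc 1 r,
        (1 - t) * ((n : ℝ) * (4 : ℝ) ^ (-(r : ℝ)) * t ^ (n * 2 ^ i - 1))
        ≤ ((4 : ℝ) ^ r)⁻¹ * (1 - t ^ n) := by
      intro i hi
      have hpow : t ^ (n * 2 ^ i - 1) ≤ t ^ (n - 1) := by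
        apply pow_le_pow_of_le_one h0 ht1
        have : n ≤ n * 2 ^ i := Nat.le_mul_of_pos_right n (by positivity)
        omega
      have hga := geom_aux t h0 ht1 n
      have h1' : (1 - t) * ((n : ℝ) * t ^ (n * 2 ^ i - 1)) ≤ 1 - t ^ n := by
        calc (1 - t) * ((n : ℝ) * t ^ (n * 2 ^ i - 1))
            ≤ (1 - t) * ((n : ℝ) * t ^ (n - 1)) := by
              apply mul_le_mul_of_nonneg_left _ (by linarith)
              exact mul_le_mul_of_nonneg_left hpow (by positivity)
          _ ≤ 1 - t ^ n := hga
      calc (1 - t) * ((n : ℝ) * (4 : ℝ) ^ (-(r : ℝ)) * t ^ (n * 2 ^ i - 1))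
          = ((4 : ℝ) ^ r)⁻¹ * ((1 - t) * ((n : ℝ) * t ^ (n * 2 ^ i - 1))) := by
            rw [h4r]; ring
        _ ≤ ((4 : ℝ) ^ r)⁻¹ * (1 - t ^ n) := by
            apply mul_le_mul_of_nonneg_left h1' (by positivity)
    calc _ ≤ ∑ _i ∈ Finset.Icc 1 r, ((4 : ℝ) ^ r)⁻¹ * (1 - t ^ n) :=
          Finset.sum_le_sum hterm
      _ = (r : ℝ) * (((4 : ℝ) ^ r)⁻¹ * (1 - t ^ n)) := by
          rw [Finset.sum_const, Nat.card_Icc]; simp [nsmul_eq_mul]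
      _ ≤ 2 * (1 - t ^ n) := by
          have hr4 : (r : ℝ) ≤ (4 : ℝ) ^ r := by
            have : r < 4 ^ r := Nat.lt_pow_self (by norm_num)
            calc (r : ℝ) ≤ ((4 ^ r : ℕ) : ℝ) := by exact_mod_cast this.le
              _ = (4 : ℝ) ^ r := by push_cast; ring
          have h4pos : (0:ℝ) < (4 : ℝ) ^ r := by positivity
          have htn : 0 ≤ 1 - t ^ n := by
            have : t ^ n ≤ 1 := pow_le_one₀ h0 ht1
            linarith
          have : (r : ℝ) * ((4 : ℝ) ^ r)⁻¹ ≤ 1 := by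
            rw [mul_inv_le_iff₀ h4pos]; linarith
          nlinarith
  have hpnn : (0:ℝ) ≤ t ^ (n * 2 ^ r) := by positivity
  linarith

/-- Deterministic Bloch-norm bound: if `f(z) = (1/r) ∑_{i,j=1}^r ζ_{i,j} z^{m_{i,j}}`
with exponents `n·2^i ≤ m_{i,j} ≤ n·2^i + n·4^{-r}`, then
`(1-|z|)|f'(z)| ≤ 2 max_i Θ_i` where `Θ_i = (1/r) ∑_j |ζ_{i,j}|`. -/
theorem stmt18 (r n : ℕ) (hr : 1 ≤ r) (hn : 1 ≤ n)
    (m : ℕ → ℕ → ℕ) (ζ : ℕ → ℕ → ℂ)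
    (hm : ∀ i ∈ Finset.Icc 1 r, ∀ j ∈ Finset.Icc 1 r,
      (n : ℝ) * 2 ^ i ≤ (m i j : ℝ) ∧
      (m i j : ℝ) ≤ (n : ℝ) * 2 ^ i + (n : ℝ) * (4 : ℝ) ^ (-(r : ℝ))) :
    ∀ z : ℂ, ‖z‖ < 1 →
      (1 - ‖z‖) *
        ‖(1 / r : ℂ) * ∑ i ∈ Finset.Icc 1 r, ∑ j ∈ Finset.Icc 1 r,
          ζ i j * (m i j : ℂ) * z ^ (m i j - 1)‖ ≤
        2 * (Finset.Icc 1 r).sup' (Finset.nonempty_Icc.2 hr)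
          (fun i => (1 / r : ℝ) * ∑ j ∈ Finset.Icc 1 r, ‖ζ i j‖) := by
  intro z hz
  set t := ‖z‖ with htdef
  have h0 : 0 ≤ t := norm_nonneg z
  have ht1 : t ≤ 1 := le_of_lt hz
  have hrR : (0 : ℝ) < (r : ℝ) := by exact_mod_cast hr
  set M := (Finset.Icc 1 r).sup' (Finset.nonempty_Icc.2 hr)
      (fun i => (1 / r : ℝ) * ∑ j ∈ Finset.Icc 1 r, ‖ζ i j‖) with hMdef
  have h1mem : (1 : ℕ) ∈ Finset.Icc 1 r := Finset.mem_Icc.mpr ⟨le_refl 1, hr⟩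
  have hM0 : 0 ≤ M := by
    have h1le := Finset.le_sup' (f := fun i => (1 / r : ℝ) * ∑ j ∈ Finset.Icc 1 r,
      ‖ζ i j‖) h1mem
    have : (0:ℝ) ≤ (1 / r : ℝ) * ∑ j ∈ Finset.Icc 1 r, ‖ζ 1 j‖ := by
      apply mul_nonneg (by positivity)
      exact Finset.sum_nonneg fun j _ => norm_nonneg _
    linarith
  -- B i bound
  set B : ℕ → ℝ := fun i => ((n : ℝ) * 2 ^ i + (n : ℝ) * (4 : ℝ) ^ (-(r : ℝ)))
      * t ^ (n * 2 ^ i - 1) with hBdef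
  have hBnn : ∀ i, 0 ≤ B i := by
    intro i
    apply mul_nonneg _ (by positivity)
    have : (0:ℝ) ≤ (4 : ℝ) ^ (-(r : ℝ)) := Real.rpow_nonneg (by norm_num) _
    positivity
  -- inner sum bound
  have hinner : ∀ i ∈ Finset.Icc 1 r,
      ‖∑ j ∈ Finset.Icc 1 r, ζ i j * (m i j : ℂ) * z ^ (m i j - 1)‖
      ≤ (r : ℝ) * M * B i := by
    intro i hi
    have hΘ : ∑ j ∈ Finset.Icc 1 r, ‖ζ i j‖ ≤ (r : ℝ) * M := by
      have hle := Finset.le_sup' (f := fun i => (1 / r : ℝ) * ∑ j ∈ Finset.Icc 1 r,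
        ‖ζ i j‖) hi
      have h2 : (1 / r : ℝ) * ∑ j ∈ Finset.Icc 1 r, ‖ζ i j‖ ≤ M := hle
      calc ∑ j ∈ Finset.Icc 1 r, ‖ζ i j‖
          = (r : ℝ) * ((1 / r : ℝ) * ∑ j ∈ Finset.Icc 1 r, ‖ζ i j‖) := by
            field_simp
        _ ≤ (r : ℝ) * M := by nlinarith
    calc ‖∑ j ∈ Finset.Icc 1 r, ζ i j * (m i j : ℂ) * z ^ (m i j - 1)‖
        ≤ ∑ j ∈ Finset.Icc 1 r, ‖ζ i j * (m i j : ℂ) * z ^ (m i j - 1)‖ := by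
          exact norm_sum_le _ _
      _ ≤ ∑ j ∈ Finset.Icc 1 r, ‖ζ i j‖ * B i := by
          apply Finset.sum_le_sum
          intro j hj
          obtain ⟨hlo, hhi⟩ := hm i hi j hj
          have hnat : n * 2 ^ i ≤ m i j := by
            have : ((n * 2 ^ i : ℕ) : ℝ) ≤ (m i j : ℝ) := by push_cast; linarith
            exact_mod_cast this
          rw [norm_mul, norm_mul, Complex.norm_natCast, norm_pow,
            ← htdef]
          rw [mul_assoc]
          apply mul_le_mul_of_nonneg_left _ (norm_nonneg _)
          rw [hBdef]
          apply mul_le_mul hhi _ (by positivity) _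
          · exact pow_le_pow_of_le_one h0 ht1 (by omega)
          · have : (0:ℝ) ≤ (4 : ℝ) ^ (-(r : ℝ)) := Real.rpow_nonneg (by norm_num) _
            positivity
      _ = (∑ j ∈ Finset.Icc 1 r, ‖ζ i j‖) * B i := by
          rw [← Finset.sum_mul]
      _ ≤ (r : ℝ) * M * B i := mul_le_mul_of_nonneg_right hΘ (hBnn i)
  -- outer bound
  have habs1r : ‖(1 / r : ℂ)‖ = 1 / (r : ℝ) := by
    rw [norm_div, norm_one, Complex.norm_natCast]
  have houter : ‖(1 / r : ℂ) * ∑ i ∈ Finset.Icc 1 r, ∑ j ∈ Finset.Icc 1 r,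
      ζ i j * (m i j : ℂ) * z ^ (m i j - 1)‖ ≤ M * ∑ i ∈ Finset.Icc 1 r, B i := by
    rw [norm_mul, habs1r]
    calc (1 / (r:ℝ)) * ‖∑ i ∈ Finset.Icc 1 r, ∑ j ∈ Finset.Icc 1 r,
          ζ i j * (m i j : ℂ) * z ^ (m i j - 1)‖
        ≤ (1 / (r:ℝ)) * ∑ i ∈ Finset.Icc 1 r, ‖∑ j ∈ Finset.Icc 1 r,
          ζ i j * (m i j : ℂ) * z ^ (m i j - 1)‖ := by
          apply mul_le_mul_of_nonneg_left (norm_sum_le _ _) (by positivity)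
      _ ≤ (1 / (r:ℝ)) * ∑ i ∈ Finset.Icc 1 r, (r : ℝ) * M * B i := by
          apply mul_le_mul_of_nonneg_left (Finset.sum_le_sum hinner) (by positivity)
      _ = M * ∑ i ∈ Finset.Icc 1 r, B i := by
          rw [Finset.mul_sum, Finset.mul_sum]
          apply Finset.sum_congr rfl
          intro i _
          field_simp
  have hkey := key_sum n r hn hr t h0 hz
  calc (1 - t) * ‖(1 / r : ℂ) * ∑ i ∈ Finset.Icc 1 r, ∑ j ∈ Finset.Icc 1 r,
        ζ i j * (m i j : ℂ) * z ^ (m i j - 1)‖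
      ≤ (1 - t) * (M * ∑ i ∈ Finset.Icc 1 r, B i) := by
        apply mul_le_mul_of_nonneg_left houter (by linarith)
    _ = M * ((1 - t) * ∑ i ∈ Finset.Icc 1 r, B i) := by ring
    _ ≤ M * 2 := mul_le_mul_of_nonneg_left hkey hM0
    _ = 2 * M := by ring
end
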